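/- arXiv:0912.2236 — 14 statements merged into one kernel-verified Lean document; each statement's English description precedes it below -/
import Mathlib

section
/- Let q = 2h+2 with h ≥ 1 an integer. For every integer a_0, every n ≥ 0 and all nonzero integers a_1, …, a_n, the two points of ℝ ∪ {∞} given by T^{a_0} S T^{a_1} S T^{a_2} ⋯ S T^{a_n} (S T)^{h} · 0 and T^{a_0} S T^{a_1} ⋯ S T^{a_n − 1} (S T^{−1})^{h} · 0 coincide; equivalently, the SL(2,ℝ) matrices T^{a_0} S T^{a_1} ⋯ S T^{a_n} (S T)^{h} and T^{a_0} S T^{a_1} ⋯ S T^{a_n − 1} (S T^{−1})^{h} have proportional second columns (so they send the projective point [0 : 1] to the same point). In the language of λ_q-continued fractions this says [a_0; a_1, …, a_n, 1^{h}] = [a_0; a_1, …, a_n − 1, (−1)^{h}]. -/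
/-- `λ_q = 2 cos (π / q)`. -/
noncomputable def lam (q : ℕ) : ℝ := 2 * Real.cos (Real.pi / (q : ℝ))

/-- The matrix `S = [[0,-1],[1,0]]`. -/
def Smat : Matrix (Fin 2) (Fin 2) ℝ := !![0, -1; 1, 0]

/-- The matrix `T^a = [[1, a·λ_q],[0,1]]`. -/
noncomputable def Tmat (q : ℕ) (a : ℤ) : Matrix (Fin 2) (Fin 2) ℝ :=
  !![1, (a : ℝ) * lam q; 0, 1]

/-- The word `T^{a_0} S T^{a_1} ⋯ S T^{a_n}`, where `a : Fin (n+1) → ℤ`. -/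
noncomputable def cfWord (q : ℕ) {n : ℕ} (a : Fin (n + 1) → ℤ) :
    Matrix (Fin 2) (Fin 2) ℝ :=
  Tmat q (a 0) * (List.ofFn (fun i : Fin n => Smat * Tmat q (a i.succ))).prod

/-- Chebyshev-like sequence: `cheb l 0 = 0`, `cheb l 1 = 1`,
`cheb l (k+2) = l * cheb l (k+1) - cheb l k`. -/
noncomputable def cheb (l : ℝ) : ℕ → ℝ
  | 0 => 0
  | 1 => 1
  | (k+2) => l * cheb l (k+1) - cheb l k

lemma cheb_zero (l : ℝ) : cheb l 0 = 0 := rfl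
lemma cheb_one (l : ℝ) : cheb l 1 = 1 := rfl
lemma cheb_add_two (l : ℝ) (k : ℕ) : cheb l (k+2) = l * cheb l (k+1) - cheb l k := rfl

lemma cheb_neg (l : ℝ) (k : ℕ) :
    cheb (-l) k = (-1)^(k+1) * cheb l k := by
  induction k using Nat.twoStepInduction with
  | zero => simp [cheb_zero]
  | one => simp [cheb_one]
  | more k ih1 ih2 =>
    rw [cheb_add_two, cheb_add_two, ih1, ih2]
    ring

lemma Mpow (l : ℝ) (k : ℕ) :
    (!![0,-1;1,l] : Matrix (Fin 2) (Fin 2) ℝ) ^ (k+1) =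
      !![-cheb l k, -(cheb l (k+1)); cheb l (k+1), cheb l (k+2)] := by
  induction k with
  | zero => simp [cheb_zero, cheb_one, cheb_add_two]
  | succ k ih =>
    rw [pow_succ, ih]
    ext i j
    fin_cases i <;> fin_cases j <;>
      simp [Matrix.mul_apply, Fin.sum_univ_two, cheb_add_two] <;> ring

lemma ST_eq (q : ℕ) (x : ℤ) :
    Smat * Tmat q x = !![0, -1; 1, (x : ℝ) * lam q] := by
  ext i j
  fin_cases i <;> fin_cases j <;>
    simp [Smat, Tmat, Matrix.mul_apply, Fin.sum_univ_two]

lemma cfWord_zero (q : ℕ) (a : Fin 1 → ℤ) : cfWord q a = Tmat q (a 0) := by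
  simp [cfWord]

lemma cfWord_succ (q : ℕ) {n : ℕ} (a : Fin (n+2) → ℤ) :
    cfWord q a = cfWord q (fun i : Fin (n+1) => a i.castSucc) *
      (Smat * Tmat q (a (Fin.last (n+1)))) := by
  unfold cfWord
  rw [List.ofFn_succ']
  simp only [List.concat_eq_append, List.prod_append, List.prod_cons, List.prod_nil,
    mul_one, Fin.succ_last]
  rw [mul_assoc]
  congr 2

lemma Tmat_mul (q : ℕ) (x y : ℤ) : Tmat q x * Tmat q y = Tmat q (x + y) := by
  ext i j
  fin_cases i <;> fin_cases j <;>
    simp [Tmat, Matrix.mul_apply, Fin.sum_univ_two] <;> push_cast <;> ring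

lemma cfWord_update_last (q : ℕ) {n : ℕ} (a : Fin (n+1) → ℤ) :
    cfWord q (Function.update a (Fin.last n) (a (Fin.last n) - 1)) =
      cfWord q a * Tmat q (-1) := by
  cases n with
  | zero =>
    rw [cfWord_zero, cfWord_zero]
    have h0 : (0 : Fin 1) = Fin.last 0 := rfl
    rw [h0, Function.update_self, Tmat_mul]
    congr 1
  | succ n =>
    rw [cfWord_succ, cfWord_succ, Function.update_self]
    have hpre : (fun i : Fin (n+1) =>
        Function.update a (Fin.last (n+1)) (a (Fin.last (n+1)) - 1) i.castSucc) =
        (fun i : Fin (n+1) => a i.castSucc) := by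
      funext i
      rw [Function.update_of_ne (by exact Fin.castSucc_lt_last i |>.ne)]
    rw [hpre, mul_assoc, mul_assoc]
    congr 1
    have : a (Fin.last (n+1)) - 1 = a (Fin.last (n+1)) + (-1) := by ring
    rw [this, ← Tmat_mul, ← mul_assoc]

/-- The key trigonometric fact: for `q = 2h+2` and `l = lam q`,
`cheb l (h+2) = cheb l h`. -/
lemma cheb_key (h : ℕ) : cheb (lam (2*h+2)) (h+2) = cheb (lam (2*h+2)) h := by
  set θ : ℝ := Real.pi / ((2*h+2 : ℕ) : ℝ) with hθ
  have hqpos : (0:ℝ) < ((2*h+2 : ℕ) : ℝ) := by positivity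
  have hθpos : 0 < θ := div_pos Real.pi_pos hqpos
  have hθlt : θ < Real.pi := by
    rw [hθ]
    apply div_lt_self Real.pi_pos
    have h4 : (1:ℕ) < 2*h+2 := by omega
    exact_mod_cast h4
  have hsinpos : 0 < Real.sin θ := Real.sin_pos_of_pos_of_lt_pi hθpos hθlt
  have hL : lam (2*h+2) = 2 * Real.cos θ := rfl
  have hsin : ∀ k : ℕ, cheb (lam (2*h+2)) k * Real.sin θ = Real.sin ((k : ℝ) * θ) := by
    intro k
    induction k using Nat.twoStepInduction with
    | zero => simp [cheb_zero]
    | one => simp [cheb_one]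
    | more k ih1 ih2 =>
      rw [cheb_add_two]
      have e1 : ((k+2 : ℕ) : ℝ) * θ = ((k+1 : ℕ) : ℝ) * θ + θ := by push_cast; ring
      have e2 : ((k : ℕ) : ℝ) * θ = ((k+1 : ℕ) : ℝ) * θ - θ := by push_cast; ring
      rw [e1, Real.sin_add]
      have ih1' := ih1
      rw [e2, Real.sin_sub] at ih1'
      linear_combination lam (2*h+2) * ih2 - ih1' +
        Real.sin (((k+1 : ℕ) : ℝ) * θ) * hL
  have hpi : Real.pi = ((2*h+2 : ℕ) : ℝ) * θ := by
    rw [hθ]; field_simp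
  have key : Real.sin (((h+2 : ℕ) : ℝ) * θ) = Real.sin (((h : ℕ) : ℝ) * θ) := by
    have e : ((h : ℕ) : ℝ) * θ = Real.pi - ((h+2 : ℕ) : ℝ) * θ := by
      rw [hpi]; push_cast; ring
    rw [e, Real.sin_pi_sub]
  have := (hsin (h+2)).trans (key.trans (hsin h).symm)
  exact mul_right_cancel₀ (ne_of_gt hsinpos) this

/-- for `q = 2h+2`, the matrices
`T^{a_0} S T^{a_1} ⋯ S T^{a_n} (S T)^h` and
`T^{a_0} S T^{a_1} ⋯ S T^{a_n - 1} (S T^{-1})^h`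
have proportional second columns, i.e.
`[a_0; a_1, …, a_n, 1^h] = [a_0; a_1, …, a_n - 1, (-1)^h]`. -/
theorem stmt0 (h q : ℕ) (hh : 1 ≤ h) (hq : q = 2 * h + 2) (n : ℕ)
    (a : Fin (n + 1) → ℤ) (ha : ∀ i : Fin (n + 1), i ≠ 0 → a i ≠ 0) :
    ∃ c : ℝ, c ≠ 0 ∧
      (cfWord q a * (Smat * Tmat q 1) ^ h) 0 1 =
        c * (cfWord q (Function.update a (Fin.last n) (a (Fin.last n) - 1)) *
          (Smat * Tmat q (-1)) ^ h) 0 1 ∧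
      (cfWord q a * (Smat * Tmat q 1) ^ h) 1 1 =
        c * (cfWord q (Function.update a (Fin.last n) (a (Fin.last n) - 1)) *
          (Smat * Tmat q (-1)) ^ h) 1 1 := by
  obtain ⟨m, rfl⟩ : ∃ m, h = m + 1 := ⟨h - 1, (Nat.succ_pred_eq_of_pos hh).symm⟩
  subst hq
  set q : ℕ := 2 * (m+1) + 2 with hqdef
  set L : ℝ := lam q with hLdef
  set s : ℕ → ℝ := cheb L with hsdef
  -- key fact
  have key : s (m+3) = s (m+1) := by
    have := cheb_key (m+1)
    have hq' : 2 * (m+1) + 2 = q := rfl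
    simpa [hsdef, hLdef, hq'] using this
  have hrec : s (m+3) = L * s (m+2) - s (m+1) := cheb_add_two L (m+1)
  have hl : L * s (m+2) = 2 * s (m+1) := by
    rw [key] at hrec; linarith
  -- power formulas
  have hST1 : Smat * Tmat q 1 = !![0, -1; 1, L] := by
    rw [ST_eq]; norm_num [hLdef]
  have hSTm1 : Smat * Tmat q (-1) = !![0, -1; 1, -L] := by
    rw [ST_eq]; norm_num [hLdef]
  have hP : (Smat * Tmat q 1) ^ (m+1) =
      !![-s m, -(s (m+1)); s (m+1), s (m+2)] := by
    rw [hST1, Mpow]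
  have hQ : (Smat * Tmat q (-1)) ^ (m+1) =
      !![-cheb (-L) m, -(cheb (-L) (m+1)); cheb (-L) (m+1), cheb (-L) (m+2)] := by
    rw [hSTm1, Mpow]
  have hA : ((-1:ℝ))^(m+1) * (-1)^(m+2) = -1 := by
    rw [← pow_add]; exact Odd.neg_one_pow ⟨m+1, by ring⟩
  have hB : ((-1:ℝ))^(m+1) * (-1)^(m+3) = 1 := by
    rw [← pow_add]; exact Even.neg_one_pow ⟨m+2, by ring⟩
  have E1 : -(s (m+1)) = (-1)^(m+1) * (-(cheb (-L) (m+1)) - L * cheb (-L) (m+2)) := by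
    rw [cheb_neg L (m+1), cheb_neg L (m+2)]
    linear_combination (s (m+1)) * hA + (L * s (m+2)) * hB + hl
  have E2 : s (m+2) = (-1)^(m+1) * cheb (-L) (m+2) := by
    rw [cheb_neg L (m+2)]
    linear_combination (-(s (m+2))) * hB
  have hTm1 : Tmat q (-1) = !![1, -L; 0, 1] := by
    rw [Tmat]; norm_num [hLdef]
  have h1 : ∀ M N : Matrix (Fin 2) (Fin 2) ℝ, ∀ i : Fin 2,
      (M * N) i 1 = M i 0 * N 0 1 + M i 1 * N 1 1 := by
    intro M N i
    simp [Matrix.mul_apply, Fin.sum_univ_two]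
  have hR : (!![1, -L; 0, 1] : Matrix (Fin 2) (Fin 2) ℝ) *
      !![-cheb (-L) m, -(cheb (-L) (m+1)); cheb (-L) (m+1), cheb (-L) (m+2)] =
      !![-cheb (-L) m - L * cheb (-L) (m+1),
         -(cheb (-L) (m+1)) - L * cheb (-L) (m+2);
         cheb (-L) (m+1), cheb (-L) (m+2)] := by
    ext i j
    fin_cases i <;> fin_cases j <;>
      simp [Matrix.mul_apply, Fin.sum_univ_two] <;> ring
  refine ⟨(-1)^(m+1), pow_ne_zero _ (by norm_num), ?_, ?_⟩
  · rw [cfWord_update_last, hP, hQ, mul_assoc, hTm1, hR, h1, h1]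
    norm_num [Matrix.cons_val_zero, Matrix.cons_val_one, Matrix.head_cons]
    linear_combination cfWord q a 0 0 * E1 + cfWord q a 0 1 * E2
  · rw [cfWord_update_last, hP, hQ, mul_assoc, hTm1, hR, h1, h1]
    norm_num [Matrix.cons_val_zero, Matrix.cons_val_one, Matrix.head_cons]
    linear_combination cfWord q a 1 0 * E1 + cfWord q a 1 1 * E2
end

section
/- Let q ≥ 3 be an integer and λ_q = 2 cos(π/q). If q = 2h+2 is even, then (S T)^{h} · 0 = −λ_q/2; if q = 2h+3 is odd, then (S T)^{h} (S T^{2}) (S T)^{h} · 0 = −λ_q/2. (These are the regular λ_q-continued fraction expansions −λ_q/2 = [0; 1^{h}] for even q and −λ_q/2 = [0; 1^{h}, 2, 1^{h}] for odd q.) -/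
/-- `sin (x + 2θ) = 2 cos θ sin (x + θ) - sin x`. -/
lemma sin_step (θ x : ℝ) :
    Real.sin (x + 2*θ) = 2 * Real.cos θ * Real.sin (x + θ) - Real.sin x := by
  have h1 : x + 2*θ = (x + θ) + θ := by ring
  rw [h1, Real.sin_add, Real.sin_add, Real.cos_add]
  linear_combination (-Real.sin x) * (Real.sin_sq_add_cos_sq θ)

lemma one_step (θ a : ℝ) (h : Real.sin (a + θ) ≠ 0) :
    -1 / (-Real.sin a / Real.sin (a + θ) + 2 * Real.cos θ)
      = -Real.sin (a + θ) / Real.sin (a + 2*θ) := by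
  have key : -Real.sin a / Real.sin (a + θ) + 2 * Real.cos θ
      = Real.sin (a + 2*θ) / Real.sin (a + θ) := by
    rw [sin_step]
    field_simp
    ring
  rw [key, div_div_eq_mul_div, neg_one_mul]

lemma iter_key (θ : ℝ) : ∀ (k : ℕ) (a : ℝ),
    (∀ j : ℕ, 1 ≤ j → j ≤ k → Real.sin (a + j*θ) ≠ 0) →
    (fun x : ℝ => -1/(x + 2*Real.cos θ))^[k] (-Real.sin a / Real.sin (a + θ))
      = -Real.sin (a + k*θ) / Real.sin (a + (k+1)*θ) := by
  intro k
  induction k with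
  | zero => intro a _; simp
  | succ n ih =>
    intro a hne
    rw [Function.iterate_succ_apply', ih a (fun j h1 h2 => hne j h1 (h2.trans (Nat.le_succ n)))]
    have h1 : Real.sin (a + n*θ + θ) ≠ 0 := by
      have := hne (n+1) (Nat.le_add_left 1 n) le_rfl
      convert this using 2
      push_cast; ring
    have := one_step θ (a + n*θ) h1
    convert this using 3 <;> push_cast <;> ring

lemma mid (t : ℝ) (hc : Real.cos t ≠ 0) (hs : Real.sin t ≠ 0) :
    -1 / (-Real.cos (3*t) / Real.cos t + 2 * (2 * Real.cos (2*t)))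
      = -Real.sin t / Real.sin (3*t) := by
  have e3s : Real.sin (3*t) = 3*Real.sin t*(Real.cos t)^2 - (Real.sin t)^3 := by
    have h : (3:ℝ)*t = t + t + t := by ring
    rw [h, Real.sin_add, Real.sin_add, Real.cos_add]; ring
  have e3c : Real.cos (3*t) = (Real.cos t)^3 - 3*(Real.sin t)^2*Real.cos t := by
    have h : (3:ℝ)*t = t + t + t := by ring
    rw [h, Real.cos_add, Real.cos_add, Real.sin_add]; ring
  have e2c : Real.cos (2*t) = (Real.cos t)^2 - (Real.sin t)^2 := by
    have h : (2:ℝ)*t = t + t := by ring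
    rw [h, Real.cos_add]; ring
  have key : -Real.cos (3*t) / Real.cos t + 2*(2*Real.cos (2*t))
      = Real.sin (3*t) / Real.sin t := by
    rw [e3s, e3c, e2c]; field_simp; ring
  rw [key, div_div_eq_mul_div, neg_one_mul]

theorem stmt2_even (q h : ℕ) (hqe : q = 2 * h + 2) :
    (fun x : ℝ => -1 / (x + lam q))^[h] 0 = -(lam q) / 2 := by
  subst hqe
  set θ : ℝ := Real.pi / ((2*h+2 : ℕ) : ℝ) with hθ
  have hN : ((2*h+2 : ℕ) : ℝ) = 2*(h:ℝ)+2 := by push_cast; ring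
  have hNpos : (0:ℝ) < 2*(h:ℝ)+2 := by positivity
  have hθpos : 0 < θ := by rw [hθ, hN]; positivity
  have hlam : lam (2*h+2) = 2 * Real.cos θ := rfl
  have hne : ∀ j : ℕ, 1 ≤ j → j ≤ h → Real.sin ((0:ℝ) + j*θ) ≠ 0 := by
    intro j hj1 hj2
    have hjpos : (0:ℝ) < j := by exact_mod_cast hj1
    apply ne_of_gt
    apply Real.sin_pos_of_pos_of_lt_pi
    · positivity
    · have hjlt : (j:ℝ) < 2*(h:ℝ)+2 := by
        have : (j:ℝ) ≤ h := by exact_mod_cast hj2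
        linarith
      calc (0:ℝ) + j*θ = (j:ℝ) * (Real.pi / (2*(h:ℝ)+2)) := by rw [hθ, hN]; ring
        _ < (2*(h:ℝ)+2) * (Real.pi / (2*(h:ℝ)+2)) := by
            apply mul_lt_mul_of_pos_right hjlt; positivity
        _ = Real.pi := by field_simp
  have h0 : (0:ℝ) = -Real.sin 0 / Real.sin (0 + θ) := by simp
  rw [hlam, h0, iter_key θ h 0 hne]
  have e1 : (0:ℝ) + ((h:ℝ)+1)*θ = Real.pi/2 := by
    rw [hθ, hN]; field_simp; ring
  have e2 : (0:ℝ) + (h:ℝ)*θ = Real.pi/2 - θ := by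
    rw [hθ, hN]; field_simp; ring
  rw [e2, e1, Real.sin_pi_div_two_sub, Real.sin_pi_div_two, div_one]
  ring

theorem stmt2_odd (q h : ℕ) (hqe : q = 2 * h + 3) :
    (fun x : ℝ => -1 / (x + lam q))^[h]
      ((fun x : ℝ => -1 / (x + 2 * lam q))
        ((fun x : ℝ => -1 / (x + lam q))^[h] 0)) = -(lam q) / 2 := by
  subst hqe
  set θ : ℝ := Real.pi / ((2*h+3 : ℕ) : ℝ) with hθ
  set t : ℝ := θ/2 with ht
  have hN : ((2*h+3 : ℕ) : ℝ) = 2*(h:ℝ)+3 := by push_cast; ring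
  have hNpos : (0:ℝ) < 2*(h:ℝ)+3 := by positivity
  have hθpos : 0 < θ := by rw [hθ, hN]; positivity
  have hθlt : θ < Real.pi := by
    rw [hθ, hN]
    rw [div_lt_iff₀ hNpos]
    nlinarith [Real.pi_pos]
  have htpos : 0 < t := by rw [ht]; linarith
  have htlt : t < Real.pi/2 := by rw [ht]; linarith
  have hlam : lam (2*h+3) = 2 * Real.cos θ := rfl
  have hc : Real.cos t ≠ 0 := by
    apply ne_of_gt
    apply Real.cos_pos_of_mem_Ioo
    constructor <;> [linarith; exact htlt]
  have hs : Real.sin t ≠ 0 := by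
    apply ne_of_gt
    apply Real.sin_pos_of_pos_of_lt_pi htpos
    linarith [Real.pi_pos]
  -- first block of h iterations from 0
  have hne1 : ∀ j : ℕ, 1 ≤ j → j ≤ h → Real.sin ((0:ℝ) + j*θ) ≠ 0 := by
    intro j hj1 hj2
    have hjpos : (0:ℝ) < j := by exact_mod_cast hj1
    apply ne_of_gt
    apply Real.sin_pos_of_pos_of_lt_pi
    · positivity
    · have hjle : (j:ℝ) ≤ h := by exact_mod_cast hj2
      have : (0:ℝ) + j*θ ≤ (h:ℝ)*θ := by nlinarith
      have hhθ : (h:ℝ)*θ < Real.pi := by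
        rw [hθ, hN]
        rw [mul_div_assoc', div_lt_iff₀ hNpos]
        nlinarith [Real.pi_pos]
      linarith
  have h0 : (0:ℝ) = -Real.sin 0 / Real.sin (0 + θ) := by simp
  rw [hlam, h0, iter_key θ h 0 hne1]
  -- rewrite the middle value
  have e3 : (0:ℝ) + (h:ℝ)*θ = Real.pi/2 - 3*t := by
    rw [ht, hθ, hN]; field_simp; ring
  have e4 : (0:ℝ) + ((h:ℝ)+1)*θ = Real.pi/2 - t := by
    rw [ht, hθ, hN]; field_simp; ring
  rw [e3, e4, Real.sin_pi_div_two_sub, Real.sin_pi_div_two_sub]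
  have hθ2t : θ = 2*t := by rw [ht]; ring
  have hmid : (fun x : ℝ => -1 / (x + 2 * (2 * Real.cos θ)))
      (-Real.cos (3*t) / Real.cos t) = -Real.sin t / Real.sin (t + θ) := by
    simp only []
    rw [hθ2t]
    rw [mid t hc hs]
    congr 1
    rw [show t + 2*t = 3*t by ring]
  rw [hmid]
  -- second block of h iterations from t
  have hne2 : ∀ j : ℕ, 1 ≤ j → j ≤ h → Real.sin (t + j*θ) ≠ 0 := by
    intro j hj1 hj2
    have hjpos : (0:ℝ) < j := by exact_mod_cast hj1
    apply ne_of_gt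
    apply Real.sin_pos_of_pos_of_lt_pi
    · positivity
    · have hjle : (j:ℝ) ≤ h := by exact_mod_cast hj2
      have h1 : t + (j:ℝ)*θ ≤ t + (h:ℝ)*θ := by nlinarith
      have h2 : t + (h:ℝ)*θ = Real.pi/2 - θ := by
        rw [ht, hθ, hN]; field_simp; ring
      linarith [Real.pi_pos]
  rw [iter_key θ h t hne2]
  have e5 : t + (h:ℝ)*θ = Real.pi/2 - θ := by
    rw [ht, hθ, hN]; field_simp; ring
  have e6 : t + ((h:ℝ)+1)*θ = Real.pi/2 := by
    rw [ht, hθ, hN]; field_simp; ring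
  rw [e5, e6, Real.sin_pi_div_two_sub, Real.sin_pi_div_two, div_one]
  ring

/-- for even `q = 2h+2`, `(ST)^h · 0 = -λ_q/2`; for odd `q = 2h+3`,
`(ST)^h (ST²) (ST)^h · 0 = -λ_q/2`, where `ST · x = -1/(x+λ_q)` and
`ST² · x = -1/(x+2λ_q)`. -/
theorem stmt2 (q h : ℕ) (hq : 3 ≤ q) :
    (q = 2 * h + 2 →
      (fun x : ℝ => -1 / (x + lam q))^[h] 0 = -(lam q) / 2) ∧
    (q = 2 * h + 3 →
      (fun x : ℝ => -1 / (x + lam q))^[h]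
        ((fun x : ℝ => -1 / (x + 2 * lam q))
          ((fun x : ℝ => -1 / (x + lam q))^[h] 0)) = -(lam q) / 2) := by
  exact ⟨stmt2_even q h, stmt2_odd q h⟩
end

section
/- Let q = 2h+3 with h ≥ 0 an integer, λ_q = 2 cos(π/q), and let R_q = (λ_q − 2 + √((2 − λ_q)² + 4))/2 be the unique positive real root of R² + (2 − λ_q) R = 1. Then the Möbius transformation (T S)^{h+1} maps R_q to −R_q, i.e. (T S)^{h+1} · R_q = −R_q, and moreover λ_q/2 < R_q ≤ 1. -/
lemma sin_le_sin_aux {a b : ℝ} (ha : 0 ≤ a) (hab : a ≤ b) (hb : b ≤ Real.pi - a) :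
    Real.sin a ≤ Real.sin b := by
  have hpi := Real.pi_pos
  rcases le_or_gt b (Real.pi/2) with hb2 | hb2
  · exact Real.strictMonoOn_sin.monotoneOn ⟨by linarith, by linarith⟩
      ⟨by linarith, hb2⟩ hab
  · rw [← Real.sin_pi_sub b]
    exact Real.strictMonoOn_sin.monotoneOn ⟨by linarith, by linarith⟩
      ⟨by linarith, by linarith⟩ (by linarith)

set_option maxHeartbeats 1600000 in
/-- for odd `q = 2h+3`, with
`R_q = (λ_q - 2 + √((2-λ_q)² + 4))/2` (the positive root of `R² + (2-λ_q)R = 1`),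
the Möbius transformation `(TS)^{h+1}` (where `TS · x = -1/x + λ_q`) maps `R_q`
to `-R_q`, and `λ_q/2 < R_q ≤ 1`. -/
theorem stmt3 (h q : ℕ) (hq : q = 2 * h + 3) (R : ℝ)
    (hR : R = (lam q - 2 + Real.sqrt ((2 - lam q) ^ 2 + 4)) / 2) :
    (fun x : ℝ => -1 / x + lam q)^[h + 1] R = -R ∧
    lam q / 2 < R ∧ R ≤ 1 := by
  subst hq
  have hpi := Real.pi_pos
  have hh0 : (0:ℝ) ≤ (h:ℝ) := Nat.cast_nonneg h
  set θ : ℝ := Real.pi / ((2 * h + 3 : ℕ) : ℝ) with hθdef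
  set L : ℝ := lam (2 * h + 3) with hLdef
  have hN : ((2 * h + 3 : ℕ) : ℝ) = 2 * (h : ℝ) + 3 := by push_cast; ring
  have hθpos : 0 < θ := by
    rw [hθdef, hN]; positivity
  have hπθ : (2 * (h:ℝ) + 3) * θ = Real.pi := by
    rw [hθdef, hN]; field_simp
  have hθle : θ ≤ Real.pi / 3 := by
    rw [hθdef, hN]
    apply div_le_div_of_nonneg_left hpi.le (by norm_num) (by linarith)
  have hθltπ : θ < Real.pi := by nlinarith [mul_pos (mul_pos (by norm_num : (0:ℝ)<2) (lt_of_lt_of_le hθpos (le_of_eq rfl))) hθpos]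
  have hLc : L = 2 * Real.cos θ := rfl
  have hc1 : Real.cos θ < 1 := by
    calc Real.cos θ < Real.cos 0 :=
          Real.cos_lt_cos_of_nonneg_of_le_pi le_rfl (by linarith) hθpos
    _ = 1 := Real.cos_zero
  have hchalf : (1:ℝ)/2 ≤ Real.cos θ := by
    calc (1:ℝ)/2 = Real.cos (Real.pi/3) := by rw [Real.cos_pi_div_three]
    _ ≤ Real.cos θ := Real.cos_le_cos_of_nonneg_of_le_pi hθpos.le (by linarith) hθle
  have hL1 : 1 ≤ L := by rw [hLc]; linarith
  have hL2 : L < 2 := by rw [hLc]; linarith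
  -- quadratic relation for R
  have hD : (0:ℝ) ≤ (2 - L)^2 + 4 := by positivity
  have hs := Real.sq_sqrt hD
  have hsnn := Real.sqrt_nonneg ((2 - L)^2 + 4)
  have hQ : R^2 + (2 - L) * R = 1 := by
    rw [hR]; linear_combination (1/4) * hs
  have hsgt : 2 - L < Real.sqrt ((2 - L)^2 + 4) := by nlinarith [hs, hsnn, hL2]
  have hR0 : 0 < R := by rw [hR]; linarith
  have hRgt : L - 1 < R := by nlinarith [hQ, hR0, hL2]
  -- the sequence g
  set g : ℕ → ℝ := fun k => Real.sin ((k : ℝ) * θ) * R - Real.sin ((k : ℝ) * θ - θ) with hg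
  have addrec : ∀ x : ℝ, Real.sin (x + θ) + Real.sin (x - θ) = 2 * Real.cos θ * Real.sin x := by
    intro x
    rw [Real.sin_add, Real.sin_sub]; ring
  have sinpos : ∀ k : ℕ, 1 ≤ k → k ≤ 2 * h + 2 → 0 < Real.sin ((k:ℝ) * θ) := by
    intro k h1 h2
    have h1' : (1:ℝ) ≤ (k:ℝ) := by exact_mod_cast h1
    have h2' : (k:ℝ) ≤ 2 * (h:ℝ) + 2 := by exact_mod_cast h2
    have hk1 : θ ≤ (k:ℝ) * θ := by nlinarith [hθpos]
    have hk2 : (k:ℝ) * θ ≤ (2 * (h:ℝ) + 2) * θ :=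
      mul_le_mul_of_nonneg_right h2' hθpos.le
    apply Real.sin_pos_of_pos_of_lt_pi (by linarith)
    nlinarith [hπθ, hθpos]
  have sinmono : ∀ k : ℕ, k ≤ h + 1 →
      Real.sin ((k:ℝ) * θ) ≤ Real.sin (((k:ℝ) + 1) * θ) := by
    intro k hk
    have hkr : (k:ℝ) ≤ (h:ℝ) + 1 := by exact_mod_cast hk
    have hk0 : (0:ℝ) ≤ (k:ℝ) := Nat.cast_nonneg k
    have hkθ : (k:ℝ) * θ ≤ ((h:ℝ) + 1) * θ := mul_le_mul_of_nonneg_right hkr hθpos.le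
    apply sin_le_sin_aux (by positivity) (by nlinarith [hθpos])
    nlinarith [hπθ, hθpos]
  have gpos : ∀ k : ℕ, k ≤ h + 1 → 0 < g k := by
    intro k hk
    match k with
    | 0 =>
      have hsθ := Real.sin_pos_of_pos_of_lt_pi hθpos hθltπ
      simp only [hg, Nat.cast_zero, zero_mul, Real.sin_zero, zero_sub, Real.sin_neg]
      linarith
    | (m+1) =>
      have hm : m ≤ h := by omega
      have h1 : 0 < Real.sin (((m+1:ℕ):ℝ) * θ) := sinpos (m+1) (by omega) (by omega)
      have h2 := sinmono (m+1) (by omega)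
      push_cast at h1 h2
      have h3 := addrec (((m:ℝ)+1) * θ)
      rw [show ((m:ℝ)+1) * θ + θ = ((m:ℝ)+1+1) * θ by ring,
          show ((m:ℝ)+1) * θ - θ = (m:ℝ) * θ by ring] at h3
      have hp : (L - 1) * Real.sin (((m:ℝ)+1) * θ) < R * Real.sin (((m:ℝ)+1) * θ) :=
        mul_lt_mul_of_pos_right hRgt h1
      simp only [hg]
      push_cast
      rw [show ((m:ℝ)+1) * θ - θ = (m:ℝ) * θ by ring]
      rw [hLc] at hp
      linarith [h2, h3, hp]
  have grec : ∀ k : ℕ, g (k + 2) = L * g (k + 1) - g k := by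
    intro k
    simp only [hg, hLc]
    push_cast
    have h3 := addrec (((k:ℝ)+1) * θ)
    have h4 := addrec ((k:ℝ) * θ)
    rw [show ((k:ℝ)+1) * θ + θ = ((k:ℝ)+2) * θ by ring,
        show ((k:ℝ)+1) * θ - θ = (k:ℝ) * θ by ring] at h3
    rw [show (k:ℝ) * θ + θ = ((k:ℝ)+1) * θ by ring] at h4
    rw [show ((k:ℝ)+2) * θ - θ = ((k:ℝ)+1) * θ by ring,
        show ((k:ℝ)+1) * θ - θ = ((k:ℝ)) * θ by ring]
    linear_combination (R * h3) - h4
  have key : ∀ k : ℕ, k ≤ h + 1 → (fun x : ℝ => -1 / x + L)^[k] R = g (k+1) / g k := by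
    intro k
    induction k with
    | zero =>
      intro _
      have hs0 : Real.sin θ ≠ 0 := (Real.sin_pos_of_pos_of_lt_pi hθpos hθltπ).ne'
      simp only [Function.iterate_zero, id_eq, hg]
      push_cast
      rw [show (1:ℝ) * θ - θ = 0 by ring, show (0:ℝ) * θ - θ = -θ by ring,
          show (1:ℝ) * θ = θ by ring, show (0:ℝ) * θ = 0 by ring]
      rw [Real.sin_neg, Real.sin_zero]
      field_simp
      rw [mul_zero, sub_zero, zero_sub, neg_neg, mul_div_assoc, div_self hs0, mul_one]
    | succ n ih =>
      intro hn
      have hn' : n ≤ h + 1 := by omega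
      rw [Function.iterate_succ_apply', ih hn']
      have p1 : (g n) ≠ 0 := (gpos n hn').ne'
      have p2 : (g (n+1)) ≠ 0 := (gpos (n+1) hn).ne'
      show -1 / (g (n+1) / g n) + L = g (n+1+1) / g (n+1)
      rw [show n+1+1 = n+2 from rfl, grec n]
      field_simp
      ring
  have hsin12 : Real.sin (((h:ℝ)+2) * θ) = Real.sin (((h:ℝ)+1) * θ) := by
    rw [show ((h:ℝ)+2) * θ = Real.pi - ((h:ℝ)+1) * θ by linarith [hπθ]]
    exact Real.sin_pi_sub _
  have ha : 0 < Real.sin (((h:ℝ)+1) * θ) := by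
    have := sinpos (h+1) (by omega) (by omega)
    push_cast at this
    exact this
  have hb : Real.sin ((h:ℝ) * θ) = (L - 1) * Real.sin (((h:ℝ)+1) * θ) := by
    have h3 := addrec (((h:ℝ)+1) * θ)
    rw [show ((h:ℝ)+1) * θ + θ = ((h:ℝ)+2) * θ by ring,
        show ((h:ℝ)+1) * θ - θ = (h:ℝ) * θ by ring, hsin12] at h3
    rw [hLc]; linarith
  have hfinal : (fun x : ℝ => -1 / x + L)^[h+1] R = -R := by
    rw [key (h+1) le_rfl]
    have p2 : 0 < g (h+1) := gpos (h+1) le_rfl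
    have e1 : g (h+1+1) = Real.sin (((h:ℝ)+1) * θ) * (R - 1) := by
      simp only [hg]; push_cast
      rw [show ((h:ℝ)+1+1) * θ - θ = ((h:ℝ)+1) * θ by ring,
          show ((h:ℝ)+1+1) * θ = ((h:ℝ)+2) * θ by ring, hsin12]
      ring
    have e2 : g (h+1) = Real.sin (((h:ℝ)+1) * θ) * (R - L + 1) := by
      simp only [hg]; push_cast
      rw [show ((h:ℝ)+1) * θ - θ = (h:ℝ) * θ by ring, hb]
      ring
    rw [e2] at p2
    rw [e1, e2]
    have hX : Real.sin (((h:ℝ)+1) * θ) * (R - L + 1) ≠ 0 := p2.ne'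
    have key2 : Real.sin (((h:ℝ)+1) * θ) * (R - 1)
        = -R * (Real.sin (((h:ℝ)+1) * θ) * (R - L + 1)) := by
      linear_combination Real.sin (((h:ℝ)+1) * θ) * hQ
    rw [key2, mul_div_assoc, div_self hX, mul_one]
  refine ⟨hfinal, ?_, ?_⟩
  · show L / 2 < R
    nlinarith [hQ, hR0, hL2, hL1]
  · nlinarith [hQ, hR0, hL2]
end

section
/- Let q = 2h+2 with h ≥ 1 an integer and λ_q = 2 cos(π/q). Let g be the Möbius transformation (S T)^{h−1} (S T^{2}), i.e. g = θ_1^{∘(h−1)} ∘ θ_2 where θ_n(x) = −1/(x + n λ_q). Then r_q := 1 − λ_q satisfies −λ_q/2 < r_q < 0, g(r_q) = r_q, and the derivative of g at this fixed point equals g′(r_q) = (2 − λ_q)/(2 + λ_q), which lies in (0, 1). (Thus r_q = [0; \overline{1^{h−1}, 2}] is the attractive fixed point of the hyperbolic element (ST)^{h−1}ST² of the Hecke triangle group G_q, and the multiplier of the corresponding closed geodesic is (2 − λ_q)/(2 + λ_q).) -/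
set_option maxHeartbeats 1000000 in
/-- for even `q = 2h+2` with `h ≥ 1`, `r_q := 1 - λ_q` satisfies
`-λ_q/2 < r_q < 0`, it is a fixed point of `g = θ₁^{∘(h-1)} ∘ θ₂`
(where `θ_n(x) = -1/(x + nλ_q)`), and `g'(r_q) = (2-λ_q)/(2+λ_q) ∈ (0,1)`. -/
theorem stmt4 (h q : ℕ) (hh : 1 ≤ h) (hq : q = 2 * h + 2) :
    let r : ℝ := 1 - lam q
    let g : ℝ → ℝ :=
      (fun x : ℝ => -1 / (x + lam q))^[h - 1] ∘ (fun x : ℝ => -1 / (x + 2 * lam q))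
    (-(lam q) / 2 < r ∧ r < 0) ∧
    g r = r ∧
    deriv g r = (2 - lam q) / (2 + lam q) ∧
    0 < (2 - lam q) / (2 + lam q) ∧ (2 - lam q) / (2 + lam q) < 1 := by
  intro r g
  obtain ⟨m, rfl⟩ : ∃ m, h = m + 1 := ⟨h - 1, (Nat.succ_pred_eq_of_pos hh).symm⟩
  subst hq
  set L : ℝ := lam (2 * (m + 1) + 2) with hLdef
  set α : ℝ := Real.pi / ((2 * (m + 1) + 2 : ℕ) : ℝ) with hαdef
  have hL : L = 2 * Real.cos α := rfl
  have hq4 : ((2 * (m + 1) + 2 : ℕ) : ℝ) = 2 * (m : ℝ) + 4 := by push_cast; ring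
  have hαpos : 0 < α := by
    rw [hαdef, hq4]
    positivity
  have hNα : (2 * (m : ℝ) + 4) * α = Real.pi := by
    rw [hαdef, hq4]
    field_simp
  set s : ℕ → ℝ := fun j => Real.sin ((2 * (j : ℝ) + 1) * α / 2) with hsdef
  have hspos : ∀ j, j ≤ m + 1 → 0 < s j := by
    intro j hj
    have hjr : (j : ℝ) ≤ (m : ℝ) + 1 := by exact_mod_cast hj
    apply Real.sin_pos_of_pos_of_lt_pi
    · positivity
    · nlinarith [hαpos, hNα]
  have hrec : ∀ j : ℕ, s (j + 2) = L * s (j + 1) - s j := by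
    intro j
    simp only [hsdef]
    push_cast
    rw [show (2 * ((j : ℝ) + 2) + 1) * α / 2 = (2 * ((j : ℝ) + 1) + 1) * α / 2 + α from by ring,
      show (2 * (j : ℝ) + 1) * α / 2 = (2 * ((j : ℝ) + 1) + 1) * α / 2 - α from by ring,
      Real.sin_add, Real.sin_sub, hL]
    ring
  have hpyth := Real.sin_sq_add_cos_sq (α / 2)
  have hcosα : Real.cos α = 2 * Real.cos (α / 2) ^ 2 - 1 := by
    have := Real.cos_two_mul (α / 2)
    rw [show 2 * (α / 2) = α from by ring] at this
    exact this
  have hsinα : Real.sin α = 2 * Real.sin (α / 2) * Real.cos (α / 2) := by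
    have := Real.sin_two_mul (α / 2)
    rw [show 2 * (α / 2) = α from by ring] at this
    exact this
  have hs0 : s 0 = Real.sin (α / 2) := by
    simp only [hsdef]
    norm_num
  have hs1 : s 1 = (1 + L) * s 0 := by
    simp only [hsdef]
    push_cast
    rw [show (2 * (1 : ℝ) + 1) * α / 2 = α / 2 + α from by ring,
      show (2 * (0 : ℝ) + 1) * α / 2 = α / 2 from by ring,
      Real.sin_add, hL, hsinα, hcosα]
    ring
  have hsm1 : s (m + 1) = Real.cos (α / 2) := by
    simp only [hsdef]
    push_cast
    rw [show (2 * ((m : ℝ) + 1) + 1) * α / 2 = Real.pi / 2 - α / 2 from by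
      linear_combination hNα / 2]
    exact Real.sin_pi_div_two_sub _
  have hsm : s m = (L - 1) * s (m + 1) := by
    have e : s m = Real.sin (Real.pi / 2 - 3 * α / 2) := by
      simp only [hsdef]
      rw [show (2 * (m : ℝ) + 1) * α / 2 = Real.pi / 2 - 3 * α / 2 from by
        linear_combination hNα / 2]
    rw [e, Real.sin_pi_div_two_sub, hsm1, hL,
      show 3 * α / 2 = α / 2 + α from by ring, Real.cos_add]
    linear_combination (- Real.sin (α / 2)) * hsinα + (- Real.cos (α / 2)) * hcosα
      + (-2 * Real.cos (α / 2)) * hpyth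
  -- bounds on L
  have hc1 : Real.cos α < 1 := by
    have := Real.cos_lt_cos_of_nonneg_of_le_pi (le_refl 0)
      (by nlinarith [hNα, hαpos, Real.pi_pos] : α ≤ Real.pi) hαpos
    simpa using this
  have hc2 : 1 / 2 < Real.cos α := by
    have hlt : α < Real.pi / 3 := by nlinarith [hNα, hαpos, Real.pi_pos]
    have := Real.cos_lt_cos_of_nonneg_of_le_pi (le_of_lt hαpos)
      (by linarith [Real.pi_pos] : Real.pi / 3 ≤ Real.pi) hlt
    rwa [Real.cos_pi_div_three] at this
  have hL1 : 1 < L := by rw [hL]; linarith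
  have hL2 : L < 2 := by rw [hL]; linarith
  -- main induction on the iterate
  set x1 : ℝ := -(s 0) / s 1 with hx1def
  have key : ∀ k, k ≤ m →
      ((fun x : ℝ => -1 / (x + L))^[k] x1 = -(s k) / s (k + 1)) ∧
      HasDerivAt ((fun x : ℝ => -1 / (x + L))^[k]) ((s 1 / s (k + 1)) ^ 2) x1 := by
    intro k
    induction k with
    | zero =>
      intro _
      constructor
      · simp [hx1def]
      · have h1 : (s 1 / s 1) ^ 2 = 1 := by
          rw [div_self (hspos 1 (by omega)).ne']
          norm_num
        simpa [h1] using hasDerivAt_id x1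
    | succ k ih =>
      intro hk
      obtain ⟨hval, hder⟩ := ih (Nat.le_of_succ_le hk)
      have p1 : 0 < s (k + 1) := hspos _ (by omega)
      have p2 : 0 < s (k + 2) := hspos _ (by omega)
      have hden : (-(s k) / s (k + 1)) + L = s (k + 2) / s (k + 1) := by
        rw [hrec k]
        field_simp
        ring
      have hden0 : (-(s k) / s (k + 1)) + L ≠ 0 := by
        rw [hden]; exact (div_pos p2 p1).ne'
      have hfe : (fun x : ℝ => -1 / (x + L)) = fun x : ℝ => -((x + L)⁻¹) := by
        funext x; ring
      have hf : HasDerivAt (fun x : ℝ => -1 / (x + L))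
          ((s (k + 1) / s (k + 2)) ^ 2) (-(s k) / s (k + 1)) := by
        rw [hfe]
        have h1 : HasDerivAt (fun x : ℝ => x + L) 1 (-(s k) / s (k + 1)) :=
          (hasDerivAt_id _).add_const L
        have h2 := (h1.inv hden0).neg
        refine h2.congr_deriv ?_
        rw [hden]
        field_simp
      constructor
      · rw [Function.iterate_succ_apply', hval]
        show -1 / ((-(s k) / s (k + 1)) + L) = -(s (k + 1)) / s (k + 2)
        rw [hden]
        field_simp
      · rw [Function.iterate_succ']
        have hf' : HasDerivAt (fun x : ℝ => -1 / (x + L)) ((s (k + 1) / s (k + 2)) ^ 2)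
            ((fun x : ℝ => -1 / (x + L))^[k] x1) := by
          rw [hval]; exact hf
        have hcomp := hf'.comp x1 hder
        refine hcomp.congr_deriv ?_
        field_simp
  obtain ⟨hgval, hgder⟩ := key m le_rfl
  have hs1pos : 0 < s 1 := hspos 1 (by omega)
  have hs0pos : 0 < s 0 := hspos 0 (by omega)
  have hsm1pos : 0 < s (m + 1) := hspos (m + 1) le_rfl
  have h1L : (0:ℝ) < 1 + L := by linarith
  -- θ₂ facts
  have hθval : -1 / (1 - L + 2 * L) = x1 := by
    rw [show (1 - L) + 2 * L = 1 + L from by ring, hx1def, hs1]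
    field_simp
  have hθden0 : (1 - L) + 2 * L ≠ 0 := by
    rw [show (1 - L) + 2 * L = 1 + L from by ring]
    exact h1L.ne'
  have hθder : HasDerivAt (fun x : ℝ => -1 / (x + 2 * L)) ((s 0 / s 1) ^ 2) (1 - L) := by
    have hfe : (fun x : ℝ => -1 / (x + 2 * L)) = fun x : ℝ => -((x + 2 * L)⁻¹) := by
      funext x; ring
    rw [hfe]
    have h1 : HasDerivAt (fun x : ℝ => x + 2 * L) 1 (1 - L) :=
      (hasDerivAt_id _).add_const (2 * L)
    have h2 := (h1.inv hθden0).neg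
    refine h2.congr_deriv ?_
    rw [show (1 - L) + 2 * L = 1 + L from by ring, hs1]
    field_simp
  have hr : r = 1 - L := rfl
  have hgdef : g = (fun x : ℝ => -1 / (x + L))^[m] ∘ (fun x : ℝ => -1 / (x + 2 * L)) := rfl
  have hgr : g r = r := by
    rw [hr, hgdef, Function.comp_apply, hθval, hgval, hsm]
    field_simp
    ring
  have hgder' : HasDerivAt ((fun x : ℝ => -1 / (x + L))^[m]) ((s 1 / s (m + 1)) ^ 2)
      (-1 / (1 - L + 2 * L)) := by
    rw [hθval]; exact hgder
  have hcomp := hgder'.comp (1 - L) hθder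
  refine ⟨⟨by rw [hr]; linarith, by rw [hr]; linarith⟩, hgr, ?_, ?_, ?_⟩
  · rw [hr, hgdef]
    rw [hcomp.deriv]
    have hcpos : 0 < Real.cos (α / 2) := hsm1 ▸ hsm1pos
    have hcosh : Real.cos (α / 2) ≠ 0 := hcpos.ne'
    have e1 : (s 1 / s (m + 1)) ^ 2 * (s 0 / s 1) ^ 2 = (s 0 / s (m + 1)) ^ 2 := by
      field_simp [hs1pos.ne', hsm1pos.ne']
    rw [e1, hsm1, hs0, hL, hcosα]
    rw [div_pow, div_eq_div_iff (by positivity)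
      ((by nlinarith [hcpos] : (0:ℝ) < 2 + 2 * (2 * Real.cos (α / 2) ^ 2 - 1)).ne')]
    nlinarith [hpyth]
  · apply div_pos <;> linarith
  · rw [div_lt_one (by linarith)]
    linarith
end

section
/- Let q = 2h+3 with h ≥ 1 an integer (so q ≥ 5 odd), λ_q = 2 cos(π/q), and let R_q = (λ_q − 2 + √((2 − λ_q)² + 4))/2 be the unique positive root of R² + (2 − λ_q) R = 1. Let g be the Möbius transformation θ_1^{∘h} ∘ θ_2 ∘ θ_1^{∘(h−1)} ∘ θ_2, where θ_n(x) = −1/(x + n λ_q). Then r_q := R_q − λ_q satisfies −λ_q/2 < r_q < 0, g(r_q) = r_q, and the derivative of g at this fixed point equals g′(r_q) = ((2 − λ_q)/(2 + R_q λ_q))². (Thus r_q = [0; \overline{1^{h}, 2, 1^{h−1}, 2}] is the attractive fixed point of the hyperbolic element (ST)^{h}(ST²)(ST)^{h−1}(ST²) of G_q.) -/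
private lemma theta_hasDerivAt (c x : ℝ) (hx : x + c ≠ 0) :
    HasDerivAt (fun y : ℝ => -1 / (y + c)) (1 / (x + c) ^ 2) x := by
  have h1 : HasDerivAt (fun y : ℝ => y + c) 1 x := (hasDerivAt_id x).add_const c
  have h2 := (h1.inv hx).neg
  have hfun : (fun y : ℝ => -(y + c)⁻¹) = fun y : ℝ => -1 / (y + c) := by
    funext y; rw [neg_div, one_div]
  rw [show (-(fun y : ℝ => y + c)⁻¹) = (fun y : ℝ => -(y + c)⁻¹) from rfl, hfun] at h2
  refine h2.congr_deriv ?_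
  ring

private lemma iter_theta (l : ℝ) (P : ℕ → ℝ)
    (hrec : ∀ k, P (k + 2) = l * P (k + 1) - P k) (n : ℕ)
    (hne : ∀ k, k ≤ n + 1 → P k ≠ 0) :
    (fun x : ℝ => -1 / (x + l))^[n] (-P 0 / P 1) = -P n / P (n + 1) ∧
      HasDerivAt ((fun x : ℝ => -1 / (x + l))^[n]) ((P 1 / P (n + 1)) ^ 2)
        (-P 0 / P 1) := by
  induction n with
  | zero =>
    refine ⟨rfl, ?_⟩
    have h1 : (P 1 / P (0 + 1)) ^ 2 = 1 := by
      rw [zero_add, div_self (hne 1 (by norm_num))]; norm_num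
    rw [h1, Function.iterate_zero]
    exact hasDerivAt_id _
  | succ n ih =>
    obtain ⟨hval, hder⟩ := ih (fun k hk => hne k (by omega))
    have hPn1 : P (n + 1) ≠ 0 := hne _ (by omega)
    have hPn2 : P (n + 2) ≠ 0 := hne _ (by omega)
    have hP1 : P 1 ≠ 0 := hne 1 (by omega)
    have hden : -P n / P (n + 1) + l = P (n + 2) / P (n + 1) := by
      field_simp
      linear_combination -hrec n
    have hdne : -P n / P (n + 1) + l ≠ 0 := by
      rw [hden]; exact div_ne_zero hPn2 hPn1
    have hθ := theta_hasDerivAt l (-P n / P (n + 1)) hdne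
    have hθder : (1 : ℝ) / (-P n / P (n + 1) + l) ^ 2
        = (P (n + 1) / P (n + 2)) ^ 2 := by
      rw [hden]
      rw [div_pow, div_pow, one_div, inv_div]
    constructor
    · rw [Function.iterate_succ_apply', hval]
      show -1 / (-P n / P (n + 1) + l) = _
      rw [hden, div_div_eq_mul_div, neg_one_mul]
    · rw [Function.iterate_succ']
      have hθ2 : HasDerivAt (fun x : ℝ => -1 / (x + l))
          ((P (n + 1) / P (n + 2)) ^ 2)
          ((fun x : ℝ => -1 / (x + l))^[n] (-P 0 / P 1)) := by
        rw [hval, ← hθder]; exact hθ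
      have := hθ2.comp (-P 0 / P 1) hder
      refine this.congr_deriv ?_
      field_simp

set_option maxHeartbeats 2000000 in
/-- for odd `q = 2h+3` with `h ≥ 1`, with
`R_q = (λ_q - 2 + √((2-λ_q)² + 4))/2` the positive root of `R² + (2-λ_q)R = 1`,
the point `r_q := R_q - λ_q` satisfies `-λ_q/2 < r_q < 0`, it is a fixed point of
`g = θ₁^{∘h} ∘ θ₂ ∘ θ₁^{∘(h-1)} ∘ θ₂` (where `θ_n(x) = -1/(x + nλ_q)`), and
`g'(r_q) = ((2-λ_q)/(2+R_qλ_q))²`. -/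
theorem stmt5 (h q : ℕ) (hh : 1 ≤ h) (hq : q = 2 * h + 3) (R : ℝ)
    (hR : R = (lam q - 2 + Real.sqrt ((2 - lam q) ^ 2 + 4)) / 2) :
    let r : ℝ := R - lam q
    let g : ℝ → ℝ :=
      (fun x : ℝ => -1 / (x + lam q))^[h] ∘ (fun x : ℝ => -1 / (x + 2 * lam q)) ∘
        (fun x : ℝ => -1 / (x + lam q))^[h - 1] ∘ (fun x : ℝ => -1 / (x + 2 * lam q))
    (-(lam q) / 2 < r ∧ r < 0) ∧
    g r = r ∧
    deriv g r = ((2 - lam q) / (2 + R * lam q)) ^ 2 := by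
  obtain ⟨m, rfl⟩ : ∃ m, h = m + 1 := ⟨h - 1, (Nat.succ_pred_eq_of_pos hh).symm⟩
  subst hq
  set l : ℝ := lam (2 * (m + 1) + 3) with hldef
  intro r g
  have hrdef : r = R - l := rfl
  have hgdef : g = (fun x : ℝ => -1 / (x + l))^[m + 1]
      ∘ (fun x : ℝ => -1 / (x + 2 * l)) ∘ (fun x : ℝ => -1 / (x + l))^[m]
      ∘ fun x : ℝ => -1 / (x + 2 * l) := by
    show ((fun x : ℝ => -1 / (x + l))^[m + 1]
      ∘ (fun x : ℝ => -1 / (x + 2 * l)) ∘ (fun x : ℝ => -1 / (x + l))^[m + 1 - 1]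
      ∘ fun x : ℝ => -1 / (x + 2 * l)) = _
    simp only [Nat.add_sub_cancel]
  clear_value r g
  clear_value l
  -- basic angle facts
  obtain ⟨t, ht⟩ : ∃ t : ℝ, t = Real.pi / (2 * (m : ℝ) + 5) := ⟨_, rfl⟩
  have hπ := Real.pi_pos
  have hqcast : ((2 * (m + 1) + 3 : ℕ) : ℝ) = 2 * (m : ℝ) + 5 := by push_cast; ring
  have hl : l = 2 * Real.cos t := by rw [hldef, lam, hqcast, ht]
  have hqpos : (0 : ℝ) < 2 * (m : ℝ) + 5 := by positivity
  have hm0 : (0:ℝ) ≤ (m:ℝ) := Nat.cast_nonneg m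
  have ht0 : 0 < t := by rw [ht]; exact div_pos hπ hqpos
  have htlt : t < Real.pi / 3 := by
    rw [ht, div_lt_div_iff₀ hqpos (by norm_num)]
    have h9 : 0 ≤ Real.pi * (m:ℝ) := by positivity
    linarith
  have htπ : t < Real.pi := lt_trans htlt (by linarith)
  have hsin : 0 < Real.sin t := Real.sin_pos_of_pos_of_lt_pi ht0 htπ
  have hcos : 1 / 2 < Real.cos t := by
    have := Real.cos_lt_cos_of_nonneg_of_le_pi ht0.le (by linarith) htlt
    rwa [Real.cos_pi_div_three] at this
  have hcos1 : Real.cos t < 1 := by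
    have := Real.cos_lt_cos_of_nonneg_of_le_pi le_rfl htπ.le ht0
    rwa [Real.cos_zero] at this
  have hl1 : 1 < l := by rw [hl]; linarith
  have hl2 : l < 2 := by rw [hl]; linarith
  -- the sequence u
  obtain ⟨u, hu⟩ : ∃ u : ℕ → ℝ, ∀ k : ℕ,
      u k = Real.sin ((k : ℝ) * t) / Real.sin t := ⟨_, fun _ => rfl⟩
  have u0 : u 0 = 0 := by rw [hu]; push_cast; simp
  have u1 : u 1 = 1 := by rw [hu]; push_cast; rw [one_mul, div_self hsin.ne']
  have u2 : u 2 = l := by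
    rw [hu, hl]
    push_cast
    rw [show (2:ℝ) * t = t + t by ring, Real.sin_add]
    field_simp
    ring
  have key : ∀ x : ℝ, Real.sin (x - t) + Real.sin (x + t)
      = 2 * Real.cos t * Real.sin x := by
    intro x; rw [Real.sin_sub, Real.sin_add]; ring
  have urec : ∀ k : ℕ, l * u (k + 1) = u k + u (k + 2) := by
    intro k
    have hx := key (((k : ℝ) + 1) * t)
    rw [hu, hu, hu, hl]
    push_cast
    rw [show (k : ℝ) * t = ((k : ℝ) + 1) * t - t by ring,
      show ((k : ℝ) + 2) * t = ((k : ℝ) + 1) * t + t by ring,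
      ← add_div, hx]
    ring
  have hπt : Real.pi = (2 * (m : ℝ) + 5) * t := by
    rw [ht]
    field_simp
  have uT2 : u (m + 3) = u (m + 2) := by
    rw [hu, hu]
    congr 1
    rw [show ((m + 3 : ℕ) : ℝ) * t = Real.pi - ((m + 2 : ℕ) : ℝ) * t by
      rw [hπt]; push_cast; ring]
    exact Real.sin_pi_sub _
  have uT3 : (2 - l) * u (m + 2) ^ 2 = 1 := by
    have hc2 : Real.sin (((m + 2 : ℕ) : ℝ) * t) = Real.cos (t / 2) := by
      rw [show ((m + 2 : ℕ) : ℝ) * t = Real.pi / 2 - t / 2 by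
        rw [hπt]; push_cast; ring]
      exact Real.sin_pi_div_two_sub _
    have hs2 : Real.sin t = 2 * Real.sin (t / 2) * Real.cos (t / 2) := by
      have := Real.sin_two_mul (t / 2)
      rw [show 2 * (t / 2) = t by ring] at this
      linarith
    have hct : Real.cos t = 1 - 2 * Real.sin (t / 2) ^ 2 := by
      have h1 := Real.cos_two_mul (t / 2)
      rw [show 2 * (t / 2) = t by ring] at h1
      have h2 := Real.sin_sq_add_cos_sq (t / 2)
      linarith
    have hcne : Real.cos (t / 2) ≠ 0 := by
      intro hc0
      rw [hc0] at hs2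
      simp at hs2
      exact hsin.ne' hs2
    have hsne : Real.sin (t / 2) ≠ 0 := by
      have : 0 < Real.sin (t / 2) :=
        Real.sin_pos_of_pos_of_lt_pi (by linarith) (by linarith)
      exact this.ne'
    rw [hu, hc2, hl, hct, div_pow, hs2]
    field_simp
    ring
  -- positivity of u
  have hupos : ∀ k : ℕ, 1 ≤ k → k ≤ m + 3 → 0 < u k := by
    intro k hk1 hk2
    rw [hu]
    apply div_pos _ hsin
    apply Real.sin_pos_of_pos_of_lt_pi
    · have h9 : (1:ℝ) ≤ (k:ℝ) := by exact_mod_cast hk1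
      exact mul_pos (by linarith) ht0
    · have h9 : (k:ℝ) ≤ (m:ℝ) + 3 := by exact_mod_cast hk2
      rw [hπt]
      apply mul_lt_mul_of_pos_right _ ht0
      linarith
  have hunn : ∀ k : ℕ, k ≤ m + 3 → 0 ≤ u k := by
    intro k hk
    rcases Nat.eq_zero_or_pos k with h0 | h1
    · subst h0; rw [u0]
    · exact (hupos k h1 hk).le
  -- facts about R
  have hDnn : (0:ℝ) ≤ (2 - l) ^ 2 + 4 := by positivity
  have hD : Real.sqrt ((2 - l) ^ 2 + 4) ^ 2 = (2 - l) ^ 2 + 4 :=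
    Real.sq_sqrt hDnn
  have h8 : Real.sqrt ((2 - l) ^ 2 + 4) = 2 * R - l + 2 := by rw [hR]; ring
  have hRsq : R ^ 2 = 1 + (l - 2) * R := by
    linear_combination (1/4) * hD
      - (1/4) * (Real.sqrt ((2 - l) ^ 2 + 4) + (2 * R - l + 2)) * h8
  have hD2 : 2 < Real.sqrt ((2 - l) ^ 2 + 4) := by
    rw [Real.lt_sqrt (by norm_num)]
    have h9 : (0:ℝ) < (2 - l) ^ 2 := pow_pos (by linarith) 2
    have h10 : (2:ℝ) ^ 2 = 4 := by norm_num
    linarith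
  have hDl : Real.sqrt ((2 - l) ^ 2 + 4) < l + 2 := by
    rw [Real.sqrt_lt' (by linarith)]
    have h9 : (l + 2) ^ 2 - (2 - l) ^ 2 = 8 * l := by ring
    linarith
  have hRhalf : l / 2 < R := by rw [hR]; linarith
  have hRl : R < l := by rw [hR]; linarith
  have hR0 : 0 < R := by linarith
  -- the sequences a and b
  obtain ⟨a, ha⟩ : ∃ a : ℕ → ℝ, ∀ k : ℕ,
      a k = u k * R + u (k + 1) := ⟨_, fun _ => rfl⟩
  obtain ⟨b, hb⟩ : ∃ b : ℕ → ℝ, ∀ k : ℕ,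
      b k = (u (m + 1) * R + u (m + 2)) * u (k + 1)
        + u (m + 2) * (R + 1) * u k := ⟨_, fun _ => rfl⟩
  have arec : ∀ k, a (k + 2) = l * a (k + 1) - a k := by
    intro k
    have h1 : a (k + 2) = u (k + 2) * R + u (k + 3) := ha (k + 2)
    have h2 : a (k + 1) = u (k + 1) * R + u (k + 2) := ha (k + 1)
    have e2 : l * u (k + 2) = u (k + 1) + u (k + 3) := urec (k + 1)
    rw [h1, h2, ha k]
    linear_combination -(R * urec k) - e2
  have brec : ∀ k, b (k + 2) = l * b (k + 1) - b k := by
    intro k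
    have h1 : b (k + 2) = (u (m + 1) * R + u (m + 2)) * u (k + 3)
        + u (m + 2) * (R + 1) * u (k + 2) := hb (k + 2)
    have h2 : b (k + 1) = (u (m + 1) * R + u (m + 2)) * u (k + 2)
        + u (m + 2) * (R + 1) * u (k + 1) := hb (k + 1)
    have e2 : l * u (k + 2) = u (k + 1) + u (k + 3) := urec (k + 1)
    rw [h1, h2, hb k]
    linear_combination -((u (m + 1) * R + u (m + 2)) * e2)
      - u (m + 2) * (R + 1) * urec k
  have apos : ∀ k, k ≤ m + 2 → 0 < a k := by
    intro k hk
    have h1 := hunn k (by omega)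
    have h2 := hupos (k + 1) (by omega) (by omega)
    have h3 : 0 ≤ u k * R := mul_nonneg h1 hR0.le
    rw [ha]; linarith
  have bpos : ∀ k, k ≤ m + 2 → 0 < b k := by
    intro k hk
    have hA : 0 < u (m + 1) * R + u (m + 2) := by
      have h1 := hupos (m + 1) (by omega) (by omega)
      have h2 := hupos (m + 2) (by omega) (by omega)
      have h5 := mul_pos h1 hR0
      linarith
    have hB : 0 < u (m + 2) * (R + 1) := by
      have h2 := hupos (m + 2) (by omega) (by omega)
      exact mul_pos h2 (by linarith)
    have h3 := hupos (k + 1) (by omega) (by omega)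
    have h4 := hunn k (by omega)
    rw [hb]
    exact add_pos_of_pos_of_nonneg (mul_pos hA h3) (mul_nonneg hB.le h4)
  have a0 : a 0 = 1 := by rw [ha, u0, u1]; ring
  have a1 : a 1 = R + l := by rw [ha, u1, u2]; ring
  have b0 : b 0 = a (m + 1) := by rw [hb, ha, u0, u1]; ring
  have b1eq : b 1 = 2 * l * a (m + 1) - a m := by
    have h1 : b 1 = (u (m + 1) * R + u (m + 2)) * u 2
        + u (m + 2) * (R + 1) * u 1 := hb 1
    have h2 : a (m + 1) = u (m + 1) * R + u (m + 2) := ha (m + 1)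
    have e2 : l * u (m + 2) = u (m + 1) + u (m + 3) := urec (m + 1)
    rw [h1, h2, ha m, u1, u2]
    linear_combination -(R * urec m) - e2 - uT2
  -- iterate computations
  obtain ⟨Ival, Ider⟩ := iter_theta l a arec m
    (fun k hk => (apos k (by omega)).ne')
  obtain ⟨Jval, Jder⟩ := iter_theta l b brec (m + 1)
    (fun k hk => (bpos k (by omega)).ne')
  have ha1 : a 1 ≠ 0 := (apos 1 (by omega)).ne'
  have ham : a m ≠ 0 := (apos m (by omega)).ne'
  have ham1 : a (m + 1) ≠ 0 := (apos (m + 1) (by omega)).ne'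
  have hb1 : b 1 ≠ 0 := (bpos 1 (by omega)).ne'
  have hbm2 : b (m + 2) ≠ 0 := (bpos (m + 2) (by omega)).ne'
  have hRl0 : R + l ≠ 0 := by positivity
  -- step values
  have e0den : r + 2 * l = a 1 := by rw [hrdef, a1]; ring
  have e0 : -1 / (r + 2 * l) = -a 0 / a 1 := by
    rw [e0den, a0]
  have e2den : -a m / a (m + 1) + 2 * l = b 1 / a (m + 1) := by
    field_simp
    linear_combination -b1eq
  have e2dne : -a m / a (m + 1) + 2 * l ≠ 0 := by
    rw [e2den]; exact div_ne_zero hb1 ham1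
  -- key final identities
  have hlV : l * u (m + 2) = u (m + 1) + u (m + 2) := by
    have h5 := urec (m + 1)
    rw [uT2] at h5
    linarith
  have hU : u (m + 1) = (l - 1) * u (m + 2) := by linarith [hlV]
  have keyfix : b (m + 1) = (l - R) * b (m + 2) := by
    have h1 : b (m + 1) = (u (m + 1) * R + u (m + 2)) * u (m + 2)
        + u (m + 2) * (R + 1) * u (m + 1) := hb (m + 1)
    have h2 : b (m + 2) = (u (m + 1) * R + u (m + 2)) * u (m + 3)
        + u (m + 2) * (R + 1) * u (m + 2) := hb (m + 2)
    rw [h1, h2, uT2, hU]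
    linear_combination u (m + 2) ^ 2 * l * hRsq
  have e3 : -b (m + 1) / b (m + 2) = r := by
    rw [keyfix, hrdef, neg_div, mul_div_assoc, div_self hbm2, mul_one]
    ring
  have key2 : (2 - l) * b (m + 2) = 2 + R * l := by
    have h2 : b (m + 2) = (u (m + 1) * R + u (m + 2)) * u (m + 3)
        + u (m + 2) * (R + 1) * u (m + 2) := hb (m + 2)
    rw [h2, uT2, hU]
    linear_combination (l * R + 2) * uT3
  have h2Rl : (0:ℝ) < 2 + R * l := by
    have h9 := mul_pos hR0 (show (0:ℝ) < l by linarith)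
    linarith
  -- derivative building blocks
  have H1 : HasDerivAt (fun x : ℝ => -1 / (x + 2 * l)) (1 / a 1 ^ 2) r := by
    have h6 := theta_hasDerivAt (2 * l) r (by rw [e0den]; exact ha1)
    rwa [e0den] at h6
  have H2 : HasDerivAt ((fun x : ℝ => -1 / (x + l))^[m]) ((a 1 / a (m + 1)) ^ 2)
      (-1 / (r + 2 * l)) := by
    rw [e0]; exact Ider
  have H12 := H2.comp r H1
  have Hv2 : ((fun x : ℝ => -1 / (x + l))^[m] ∘ fun x : ℝ => -1 / (x + 2 * l)) r
      = -a m / a (m + 1) := by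
    simp only [Function.comp_apply]
    rw [e0, Ival]
  have H3 : HasDerivAt (fun x : ℝ => -1 / (x + 2 * l)) ((a (m + 1) / b 1) ^ 2)
      (((fun x : ℝ => -1 / (x + l))^[m] ∘ fun x : ℝ => -1 / (x + 2 * l)) r) := by
    rw [Hv2]
    have h7 := theta_hasDerivAt (2 * l) (-a m / a (m + 1)) e2dne
    rw [e2den] at h7
    convert h7 using 1
    rw [div_pow, div_pow, one_div, inv_div]
  have H123 := H3.comp r H12
  have Hv3 : ((fun x : ℝ => -1 / (x + 2 * l)) ∘ (fun x : ℝ => -1 / (x + l))^[m]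
      ∘ fun x : ℝ => -1 / (x + 2 * l)) r = -b 0 / b 1 := by
    simp only [Function.comp_apply]
    rw [e0, Ival, e2den, b0, div_div_eq_mul_div, neg_one_mul]
  have H4 : HasDerivAt ((fun x : ℝ => -1 / (x + l))^[m + 1])
      ((b 1 / b (m + 2)) ^ 2)
      (((fun x : ℝ => -1 / (x + 2 * l)) ∘ (fun x : ℝ => -1 / (x + l))^[m]
        ∘ fun x : ℝ => -1 / (x + 2 * l)) r) := by
    rw [Hv3]; exact Jder
  have Hg := H4.comp r H123
  refine ⟨⟨by rw [hrdef]; linarith, by rw [hrdef]; linarith⟩, ?_, ?_⟩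
  · rw [hgdef]
    show ((fun x : ℝ => -1 / (x + l))^[m + 1])
      (((fun x : ℝ => -1 / (x + 2 * l)) ∘ (fun x : ℝ => -1 / (x + l))^[m]
        ∘ fun x : ℝ => -1 / (x + 2 * l)) r) = r
    rw [Hv3, Jval, e3]
  · rw [hgdef]
    rw [Hg.deriv]
    have hfrac : (1:ℝ) / b (m + 2) = (2 - l) / (2 + R * l) := by
      rw [div_eq_div_iff hbm2 h2Rl.ne']
      linarith [key2]
    rw [show ((b 1 / b (m + 2)) ^ 2 * ((a (m + 1) / b 1) ^ 2
        * ((a 1 / a (m + 1)) ^ 2 * (1 / a 1 ^ 2)))) = (1 / b (m + 2)) ^ 2 by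
      field_simp]
    rw [hfrac]
end

section
/- Let q = 4 (so λ_4 = √2) and θ_n(x) = −1/(x + n√2) for n ∈ ℤ∖{0}. Set I_1 = (−1, √2/4) and I_{−1} = −I_1 = (−√2/4, 1). Then [−√2/2, 0] ⊂ I_1, [0, √2/2] ⊂ I_{−1}, and: for every x in the closed interval [−1, √2/4], θ_n(x) ∈ I_1 for every integer n ≥ 2 and θ_n(x) ∈ I_{−1} for every integer n ≤ −1; for every x in the closed interval [−√2/4, 1], θ_n(x) ∈ I_{−1} for every integer n ≤ −2 and θ_n(x) ∈ I_1 for every integer n ≥ 1. -/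
/-- for `q = 4` (so `λ_4 = √2`) and `θ_n(x) = -1/(x+n√2)`, with
`I_1 = (-1, √2/4)` and `I_{-1} = (-√2/4, 1)`: `[-√2/2, 0] ⊂ I_1`,
`[0, √2/2] ⊂ I_{-1}`, and for all `x ∈ [-1, √2/4]`: `θ_n(x) ∈ I_1` for `n ≥ 2`,
`θ_n(x) ∈ I_{-1}` for `n ≤ -1`; for all `x ∈ [-√2/4, 1]`: `θ_n(x) ∈ I_{-1}` for
`n ≤ -2`, `θ_n(x) ∈ I_1` for `n ≥ 1`. -/
theorem stmt8 :
    Set.Icc (-(Real.sqrt 2) / 2) 0 ⊆ Set.Ioo (-1 : ℝ) (Real.sqrt 2 / 4) ∧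
    Set.Icc (0 : ℝ) (Real.sqrt 2 / 2) ⊆ Set.Ioo (-(Real.sqrt 2) / 4) 1 ∧
    (∀ x ∈ Set.Icc (-1 : ℝ) (Real.sqrt 2 / 4),
      (∀ n : ℤ, 2 ≤ n →
        -1 / (x + (n : ℝ) * Real.sqrt 2) ∈ Set.Ioo (-1 : ℝ) (Real.sqrt 2 / 4)) ∧
      (∀ n : ℤ, n ≤ -1 →
        -1 / (x + (n : ℝ) * Real.sqrt 2) ∈ Set.Ioo (-(Real.sqrt 2) / 4) 1)) ∧
    (∀ x ∈ Set.Icc (-(Real.sqrt 2) / 4) 1,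
      (∀ n : ℤ, n ≤ -2 →
        -1 / (x + (n : ℝ) * Real.sqrt 2) ∈ Set.Ioo (-(Real.sqrt 2) / 4) 1) ∧
      (∀ n : ℤ, 1 ≤ n →
        -1 / (x + (n : ℝ) * Real.sqrt 2) ∈ Set.Ioo (-1 : ℝ) (Real.sqrt 2 / 4))) := by
  have hsq : Real.sqrt 2 ^ 2 = 2 := Real.sq_sqrt (by norm_num)
  have hnn : (0:ℝ) ≤ Real.sqrt 2 := Real.sqrt_nonneg 2
  have hlo : (4:ℝ)/3 < Real.sqrt 2 := by nlinarith
  have hhi : Real.sqrt 2 < (3:ℝ)/2 := by nlinarith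
  -- key lemmas
  have key1 : ∀ d : ℝ, 1 < d → -1 / d ∈ Set.Ioo (-1 : ℝ) (Real.sqrt 2 / 4) := by
    intro d hd
    have hd0 : (0:ℝ) < d := by linarith
    constructor
    · rw [lt_div_iff₀ hd0]; nlinarith
    · have : -1 / d < 0 := div_neg_of_neg_of_pos (by norm_num) hd0
      linarith
  have key2 : ∀ d : ℝ, d < -1 → -1 / d ∈ Set.Ioo (-(Real.sqrt 2) / 4) 1 := by
    intro d hd
    have hd0 : (0:ℝ) < -d := by linarith
    have heq : -1 / d = 1 / (-d) := by
      rw [div_neg, neg_div]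
    rw [heq]
    constructor
    · have : (0:ℝ) < 1 / (-d) := by positivity
      linarith
    · rw [div_lt_one hd0]; linarith
  refine ⟨?_, ?_, ?_, ?_⟩
  · intro x hx
    obtain ⟨h1, h2⟩ := hx
    exact ⟨by linarith, by linarith⟩
  · intro x hx
    obtain ⟨h1, h2⟩ := hx
    exact ⟨by linarith, by linarith⟩
  · rintro x ⟨hx1, hx2⟩
    constructor
    · intro n hn
      have hn' : (2:ℝ) ≤ (n:ℝ) := by exact_mod_cast hn
      apply key1
      nlinarith
    · intro n hn
      have hn' : ((n:ℝ)) ≤ -1 := by exact_mod_cast hn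
      apply key2
      nlinarith
  · rintro x ⟨hx1, hx2⟩
    constructor
    · intro n hn
      have hn' : ((n:ℝ)) ≤ -2 := by exact_mod_cast hn
      apply key2
      nlinarith
    · intro n hn
      have hn' : (1:ℝ) ≤ (n:ℝ) := by exact_mod_cast hn
      apply key1
      nlinarith
end

section
/- Let q = 2h+2 with h ≥ 2 an integer and λ_q = 2 cos(π/q). Define d_0 = 0, d_{j+1} = −1/(d_j − λ_q) (so d_j = (S T^{−1})^{j} · 0), and c_i = d_i − λ_q = T^{−1}(S T^{−1})^{i} · 0 for 0 ≤ i ≤ h. Then (S T)^{h−i} · (−λ_q/2) = c_i for every 0 ≤ i ≤ h (equivalently θ_1^{∘(h−i)}(−λ_q/2) = c_i, where θ_1(x) = −1/(x + λ_q)), and these points are strictly increasing: −λ_q = c_0 < c_1 < ⋯ < c_{h−1} < c_h = −λ_q/2. -/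
/-- for even `q = 2h+2` with `h ≥ 2`, with `d_0 = 0`,
`d_{j+1} = -1/(d_j - λ_q)` and `c_i = d_i - λ_q`, one has
`(ST)^{h-i} · (-λ_q/2) = c_i` for `0 ≤ i ≤ h` (where `ST · x = -1/(x+λ_q)`), and
`-λ_q = c_0 < c_1 < ⋯ < c_{h-1} < c_h = -λ_q/2`. -/
theorem stmt9 (h q : ℕ) (hh : 2 ≤ h) (hq : q = 2 * h + 2) :
    let d : ℕ → ℝ := fun j => (fun x : ℝ => -1 / (x - lam q))^[j] 0
    let c : ℕ → ℝ := fun i => d i - lam q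
    (∀ i ≤ h, (fun x : ℝ => -1 / (x + lam q))^[h - i] (-(lam q) / 2) = c i) ∧
    c 0 = -(lam q) ∧ c h = -(lam q) / 2 ∧
    (∀ i j : ℕ, i < j → j ≤ h → c i < c j) := by
  intro d c
  set θ : ℝ := Real.pi / (q : ℝ) with hθdef
  have hq2 : (q : ℝ) = 2 * (h : ℝ) + 2 := by rw [hq]; push_cast; ring
  have hqpos : (0:ℝ) < (q : ℝ) := by rw [hq2]; positivity
  have hθpos : 0 < θ := div_pos Real.pi_pos hqpos
  have hlam : lam q = 2 * Real.cos θ := rfl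
  have hπ2 : ((h : ℝ) + 1) * θ = Real.pi / 2 := by
    rw [hθdef, hq2]; field_simp
  -- positivity of the relevant sines
  have hsin : ∀ k : ℕ, 1 ≤ k → k ≤ h + 2 → 0 < Real.sin ((k : ℝ) * θ) := by
    intro k h1 h2
    apply Real.sin_pos_of_pos_of_lt_pi
    · have : (1:ℝ) ≤ (k:ℝ) := by exact_mod_cast h1
      nlinarith
    · have hk : (k : ℝ) < (q : ℝ) := by
        rw [hq2]
        have : (k:ℝ) ≤ (h:ℝ) + 2 := by exact_mod_cast h2
        have h2' : (2:ℝ) ≤ (h:ℝ) := by exact_mod_cast hh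
        linarith
      calc (k:ℝ) * θ < (q:ℝ) * θ := mul_lt_mul_of_pos_right hk hθpos
        _ = Real.pi := by rw [hθdef]; field_simp
  have hsθ : 0 < Real.sin θ := by
    have := hsin 1 le_rfl (by omega)
    simpa using this
  -- closed form for d
  have hd : ∀ j ≤ h, d j = Real.sin ((j : ℝ) * θ) / Real.sin (((j : ℝ) + 1) * θ) := by
    intro j hj
    induction j with
    | zero => simp [d]
    | succ n ih =>
      have hn : n ≤ h := Nat.le_of_succ_le hj
      have ihn := ih hn
      have hstep : d (n + 1) = -1 / (d n - lam q) := by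
        show (fun x : ℝ => -1 / (x - lam q))^[n + 1] 0 = _
        rw [Function.iterate_succ_apply']
      have s2pos : 0 < Real.sin (((n : ℝ) + 1) * θ) := by
        have := hsin (n + 1) (by omega) (by omega)
        push_cast at this; exact this
      have s3pos : 0 < Real.sin (((n : ℝ) + 2) * θ) := by
        have := hsin (n + 2) (by omega) (by omega)
        push_cast at this; exact this
      have hr : Real.sin (((n : ℝ) + 2) * θ)
          = 2 * Real.cos θ * Real.sin (((n : ℝ) + 1) * θ) - Real.sin ((n : ℝ) * θ) := by
        rw [show ((n:ℝ) + 2) * θ = ((n:ℝ)+1) * θ + θ from by ring,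
            show ((n:ℝ)) * θ = ((n:ℝ)+1) * θ - θ from by ring,
            Real.sin_add, Real.sin_sub]
        ring
      push_cast
      rw [show ((n:ℝ) + 1 + 1) = (n:ℝ) + 2 from by ring]
      rw [hstep, ihn, hlam]
      have hdne : Real.sin ((n : ℝ) * θ) / Real.sin (((n : ℝ) + 1) * θ) - 2 * Real.cos θ
          = -Real.sin (((n : ℝ) + 2) * θ) / Real.sin (((n : ℝ) + 1) * θ) := by
        rw [eq_div_iff s2pos.ne', sub_mul, div_mul_cancel₀ _ s2pos.ne']
        linarith [hr]
      rw [hdne]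
      rw [div_div_eq_mul_div, neg_one_mul, neg_div_neg_eq]
  -- closed form for c
  have hc : ∀ i ≤ h, c i
      = -(Real.sin (((i : ℝ) + 2) * θ) / Real.sin (((i : ℝ) + 1) * θ)) := by
    intro i hi
    have s2pos : 0 < Real.sin (((i : ℝ) + 1) * θ) := by
      have := hsin (i + 1) (by omega) (by omega)
      push_cast at this; exact this
    have hr : Real.sin (((i : ℝ) + 2) * θ)
        = 2 * Real.cos θ * Real.sin (((i : ℝ) + 1) * θ) - Real.sin ((i : ℝ) * θ) := by
      rw [show ((i:ℝ) + 2) * θ = ((i:ℝ)+1) * θ + θ from by ring,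
          show ((i:ℝ)) * θ = ((i:ℝ)+1) * θ - θ from by ring,
          Real.sin_add, Real.sin_sub]
      ring
    show d i - lam q = _
    rw [hd i hi, hlam]
    rw [← neg_div, eq_div_iff s2pos.ne', sub_mul, div_mul_cancel₀ _ s2pos.ne']
    linarith [hr]
  have hcneg : ∀ i ≤ h, c i < 0 := by
    intro i hi
    rw [hc i hi]
    have s2pos : 0 < Real.sin (((i : ℝ) + 1) * θ) := by
      have := hsin (i + 1) (by omega) (by omega); push_cast at this; exact this
    have s3pos : 0 < Real.sin (((i : ℝ) + 2) * θ) := by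
      have := hsin (i + 2) (by omega) (by omega); push_cast at this; exact this
    have := div_pos s3pos s2pos
    linarith
  -- endpoint value c h
  have ch : c h = -(lam q) / 2 := by
    rw [hc h le_rfl, hlam]
    rw [show ((h:ℝ) + 2) * θ = ((h:ℝ)+1) * θ + θ from by ring, hπ2,
        Real.sin_add, Real.sin_pi_div_two, Real.cos_pi_div_two]
    ring
  -- the iteration identity
  have hkey : ∀ k ≤ h, (fun x : ℝ => -1 / (x + lam q))^[k] (-(lam q) / 2) = c (h - k) := by
    intro k hk
    induction k with
    | zero => simpa using ch.symm
    | succ n ih =>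
      have hn : n ≤ h := Nat.le_of_succ_le hk
      rw [Function.iterate_succ_apply', ih hn]
      have hm : h - n = (h - (n + 1)) + 1 := by omega
      set m := h - (n + 1) with hmdef
      have hcm : c m < 0 := hcneg m (by omega)
      have hdm : d (m + 1) = -1 / (d m - lam q) := by
        show (fun x : ℝ => -1 / (x - lam q))^[m + 1] 0 = _
        rw [Function.iterate_succ_apply']
      have h1 : c (h - n) + lam q = d (m + 1) := by
        rw [hm]; show d (m + 1) - lam q + lam q = d (m + 1); ring
      have h2 : d m - lam q = c m := rfl
      show -1 / (c (h - n) + lam q) = c m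
      rw [h1, hdm, h2]
      field_simp
  refine ⟨?_, ?_, ch, ?_⟩
  · intro i hi
    have := hkey (h - i) (by omega)
    rwa [show h - (h - i) = i from by omega] at this
  · simp [c, d]
  · -- strict monotonicity
    have hsucc : ∀ i : ℕ, i + 1 ≤ h → c i < c (i + 1) := by
      intro i hi1
      rw [hc i (by omega), hc (i + 1) hi1]
      push_cast
      rw [show ((i:ℝ) + 1 + 2) = (i:ℝ) + 3 from by ring,
          show ((i:ℝ) + 1 + 1) = (i:ℝ) + 2 from by ring]
      have s2pos : 0 < Real.sin (((i : ℝ) + 1) * θ) := by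
        have := hsin (i + 1) (by omega) (by omega); push_cast at this; exact this
      have s3pos : 0 < Real.sin (((i : ℝ) + 2) * θ) := by
        have := hsin (i + 2) (by omega) (by omega); push_cast at this; exact this
      have s4pos : 0 < Real.sin (((i : ℝ) + 3) * θ) := by
        have := hsin (i + 3) (by omega) (by omega); push_cast at this; exact this
      rw [neg_lt_neg_iff, div_lt_div_iff₀ s3pos s2pos]
      have e4 : Real.sin (((i:ℝ) + 3) * θ)
          = Real.sin (((i:ℝ)+2) * θ) * Real.cos θ + Real.cos (((i:ℝ)+2) * θ) * Real.sin θ := by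
        rw [show ((i:ℝ) + 3) * θ = ((i:ℝ)+2) * θ + θ from by ring, Real.sin_add]
      have e2 : Real.sin (((i:ℝ) + 1) * θ)
          = Real.sin (((i:ℝ)+2) * θ) * Real.cos θ - Real.cos (((i:ℝ)+2) * θ) * Real.sin θ := by
        rw [show ((i:ℝ) + 1) * θ = ((i:ℝ)+2) * θ - θ from by ring, Real.sin_sub]
      nlinarith [Real.sin_sq_add_cos_sq θ, Real.sin_sq_add_cos_sq (((i:ℝ)+2) * θ),
        mul_pos hsθ hsθ, sq_nonneg (Real.cos (((i:ℝ)+2) * θ) * Real.sin θ)]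
    intro i j
    induction j with
    | zero => intro h1 _; omega
    | succ n ihj =>
      intro h1 h2
      rcases Nat.lt_succ_iff_lt_or_eq.mp h1 with h3 | h3
      · exact lt_trans (ihj h3 (by omega)) (hsucc n h2)
      · subst h3; exact hsucc i h2
end

section
/- Let q = 2h+3 with h ≥ 1 an integer and λ_q = 2 cos(π/q). With θ_{−1}(x) = −1/(x − λ_q), θ_{−2}(x) = −1/(x − 2λ_q) and θ_1(x) = −1/(x + λ_q), define b_i = θ_{−1}^{∘i}(0) − λ_q (= T^{−1}(S T^{−1})^{i} · 0) for 0 ≤ i ≤ h, and a_i = θ_{−1}^{∘i}(θ_{−2}(θ_{−1}^{∘h}(0))) − λ_q (= T^{−1}(S T^{−1})^{i} (S T^{−2}) (S T^{−1})^{h} · 0) for 0 ≤ i ≤ h. Then: (S T)^{h−i} · (−λ_q/2) = a_i for every 0 ≤ i ≤ h; (S T)^{h+1−i} · (θ_1^{∘h}(0)) = b_i for every 1 ≤ i ≤ h; and the points interleave strictly: −λ_q = b_0 < a_0 < b_1 < a_1 < b_2 < a_2 < ⋯ < b_h < a_h = −λ_q/2. -/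
open Real

noncomputable def th (h : ℕ) : ℝ := Real.pi / (2*(h:ℝ)+3)
noncomputable def sn (h n : ℕ) : ℝ := Real.sin ((n:ℝ) * th h)
noncomputable def tn (h n : ℕ) : ℝ := Real.sin ((2*(n:ℝ)+1) * th h / 2)

lemma th_pos (h : ℕ) : 0 < th h := by
  unfold th; positivity

lemma th_key (h : ℕ) : (2*(h:ℝ)+3) * th h = Real.pi := by
  unfold th; field_simp

lemma th_lt (h : ℕ) : th h < Real.pi / 2 := by
  have := th_pos h
  nlinarith [th_key h]

lemma sn_pos (h : ℕ) {n : ℕ} (h1 : 1 ≤ n) (h2 : n ≤ 2*h+2) : 0 < sn h n := by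
  unfold sn
  apply Real.sin_pos_of_pos_of_lt_pi
  · have : (1:ℝ) ≤ (n:ℝ) := by exact_mod_cast h1
    nlinarith [th_pos h]
  · have : (n:ℝ) ≤ 2*(h:ℝ)+2 := by exact_mod_cast h2
    nlinarith [th_pos h, th_key h]

lemma tn_pos (h : ℕ) {n : ℕ} (h2 : n ≤ 2*h+2) : 0 < tn h n := by
  unfold tn
  apply Real.sin_pos_of_pos_of_lt_pi
  · have : (0:ℝ) ≤ (n:ℝ) := Nat.cast_nonneg n
    nlinarith [th_pos h]
  · have : (n:ℝ) ≤ 2*(h:ℝ)+2 := by exact_mod_cast h2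
    nlinarith [th_pos h, th_key h]

lemma sn_rec (h n : ℕ) : sn h (n+2) = 2 * Real.cos (th h) * sn h (n+1) - sn h n := by
  unfold sn
  push_cast
  have e1 : ((n:ℝ)+2) * th h = ((n:ℝ)+1) * th h + th h := by ring
  have e2 : (n:ℝ) * th h = ((n:ℝ)+1) * th h - th h := by ring
  rw [e1, e2, Real.sin_add, Real.sin_sub]; ring

lemma tn_rec (h n : ℕ) : tn h (n+2) = 2 * Real.cos (th h) * tn h (n+1) - tn h n := by
  unfold tn
  push_cast
  have e1 : (2*((n:ℝ)+2)+1) * th h / 2 = (2*((n:ℝ)+1)+1) * th h / 2 + th h := by ring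
  have e2 : (2*(n:ℝ)+1) * th h / 2 = (2*((n:ℝ)+1)+1) * th h / 2 - th h := by ring
  rw [e1, e2, Real.sin_add, Real.sin_sub]; ring

lemma sn_symm (h : ℕ) {n : ℕ} (hn : n ≤ 2*h+3) : sn h (2*h+3-n) = sn h n := by
  unfold sn
  have e : ((2*h+3-n : ℕ) : ℝ) = 2*(h:ℝ)+3 - (n:ℝ) := by
    push_cast [Nat.cast_sub hn]; ring
  rw [e, sub_mul, th_key, Real.sin_pi_sub]

lemma tn_h1 (h : ℕ) : tn h (h+1) = 1 := by
  unfold tn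
  have e : (2*((h:ℝ)+1)+1) * th h / 2 = Real.pi / 2 := by
    rw [← th_key h]; push_cast; ring
  push_cast [e, Real.sin_pi_div_two]
  norm_num

lemma tn_h2 (h : ℕ) : tn h (h+2) = Real.cos (th h) := by
  unfold tn
  have e : (2*((h:ℝ)+2)+1) * th h / 2 = Real.pi / 2 + th h := by
    rw [← th_key h]; ring
  push_cast [e]
  rw [Real.sin_add, Real.sin_pi_div_two, Real.cos_pi_div_two]; ring

lemma lam_eq (h : ℕ) : lam (2*h+3) = 2 * Real.cos (th h) := by
  unfold lam th
  norm_num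

lemma aux_prod (x y z : ℝ) : Real.sin (x+z) * Real.sin y - Real.sin x * Real.sin (y+z)
    = Real.sin z * Real.sin (y - x) := by
  rw [Real.sin_add, Real.sin_add, Real.sin_sub]; ring

lemma sn_h1 (h : ℕ) : sn h (h+1) = Real.cos (th h / 2) := by
  unfold sn
  have e : ((h:ℝ)+1) * th h = Real.pi / 2 - th h / 2 := by
    rw [← th_key h]; ring
  push_cast [e, Real.sin_pi_div_two_sub]
  norm_num

lemma sn_h0 (h : ℕ) : sn h h = Real.cos (3 * th h / 2) := by
  unfold sn
  have e : ((h:ℝ)) * th h = Real.pi / 2 - 3 * th h / 2 := by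
    rw [← th_key h]; ring
  push_cast [e, Real.sin_pi_div_two_sub]
  norm_num

lemma base_id (h : ℕ) :
    tn h 1 * sn h (h+1) = tn h 0 * (4 * Real.cos (th h) * sn h (h+1) - sn h h) := by
  rw [sn_h1, sn_h0]
  unfold tn
  have c := th h / 2
  have e1 : (2*((1:ℕ):ℝ)+1) * th h / 2 = th h / 2 + (th h /2 + th h / 2) := by ring
  have e0 : (2*((0:ℕ):ℝ)+1) * th h / 2 = th h / 2 := by ring
  have e2 : (3:ℝ) * th h / 2 = th h / 2 + (th h /2 + th h / 2) := by ring
  have e3 : th h = th h / 2 + th h / 2 := by ring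
  rw [e1, e0, e2, e3]
  simp only [Real.sin_add, Real.cos_add]
  ring

lemma interleave1 (h i : ℕ) : sn h (i+2) * tn h (i+1) - sn h (i+1) * tn h (i+2)
    = Real.sin (th h) * Real.sin (th h / 2) := by
  have key := aux_prod (((i:ℝ)+1) * th h) ((2*((i:ℝ)+1)+1) * th h / 2) (th h)
  rw [show (2*((i:ℝ)+1)+1) * th h / 2 - ((i:ℝ)+1) * th h = th h / 2 from by ring] at key
  unfold sn tn
  push_cast
  rw [show ((i:ℝ)+2)*th h = ((i:ℝ)+1)*th h + th h from by ring,
      show (2*((i:ℝ)+2)+1)*th h/2 = (2*((i:ℝ)+1)+1)*th h/2 + th h from by ring]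
  exact key

lemma interleave2 (h i : ℕ) : tn h (i+2) * sn h (i+2) - tn h (i+1) * sn h (i+3)
    = Real.sin (th h) * Real.sin (th h / 2) := by
  have key := aux_prod ((2*((i:ℝ)+1)+1) * th h / 2) (((i:ℝ)+2) * th h) (th h)
  rw [show ((i:ℝ)+2) * th h - (2*((i:ℝ)+1)+1) * th h / 2 = th h / 2 from by ring] at key
  unfold sn tn
  push_cast
  rw [show (2*((i:ℝ)+2)+1)*th h/2 = (2*((i:ℝ)+1)+1)*th h/2 + th h from by ring,
      show ((i:ℝ)+3)*th h = ((i:ℝ)+2)*th h + th h from by ring]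
  exact key

lemma prodpos (h : ℕ) : 0 < Real.sin (th h) * Real.sin (th h / 2) := by
  have h1 := th_pos h
  have h2 := th_key h
  apply mul_pos <;> apply Real.sin_pos_of_pos_of_lt_pi <;> nlinarith

lemma tm1_iter (h : ℕ) : ∀ i ≤ h,
    (fun x : ℝ => -1/(x - lam (2*h+3)))^[i] 0 = sn h i / sn h (i+1) := by
  intro i
  induction i with
  | zero => intro _; simp [sn]
  | succ i ih =>
    intro hi
    rw [Function.iterate_succ_apply', ih (by omega)]
    have n1 : sn h (i+1) ≠ 0 := ne_of_gt (sn_pos h (by omega) (by omega))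
    have n2 : sn h (i+2) ≠ 0 := ne_of_gt (sn_pos h (by omega) (by omega))
    have hr := sn_rec h i
    rw [lam_eq]
    show -1/(sn h i / sn h (i+1) - 2 * Real.cos (th h)) = sn h (i+1) / sn h (i+2)
    rw [div_sub' n1]
    field_simp
    rw [show sn h i - sn h (i+1) * 2 * Real.cos (th h) = -sn h (i+2) from by linarith]
    field_simp

lemma t1_iter (h : ℕ) : ∀ n ≤ 2*h+1,
    (fun x : ℝ => -1/(x + lam (2*h+3)))^[n] 0 = -(sn h n / sn h (n+1)) := by
  intro n
  induction n with
  | zero => intro _; simp [sn]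
  | succ n ih =>
    intro hn
    rw [Function.iterate_succ_apply', ih (by omega)]
    have n1 : sn h (n+1) ≠ 0 := ne_of_gt (sn_pos h (by omega) (by omega))
    have n2 : sn h (n+2) ≠ 0 := ne_of_gt (sn_pos h (by omega) (by omega))
    have hr := sn_rec h n
    rw [lam_eq]
    show -1/(-(sn h n / sn h (n+1)) + 2 * Real.cos (th h)) = -(sn h (n+1) / sn h (n+2))
    field_simp
    rw [show -sn h n + sn h (n+1) * 2 * Real.cos (th h) = sn h (n+2) from by linarith]
    field_simp

lemma Dpos (h : ℕ) : 0 < 4 * Real.cos (th h) * sn h (h+1) - sn h h := by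
  have hr := sn_rec h h
  have p1 := sn_pos h (n := h+1) (by omega) (by omega)
  have p2 := sn_pos h (n := h+2) (by omega) (by omega)
  have hc : 0 < Real.cos (th h) := Real.cos_pos_of_mem_Ioo
    ⟨by nlinarith [th_pos h, Real.pi_pos], th_lt h⟩
  nlinarith

lemma v_eq (h : ℕ) :
    (fun x : ℝ => -1/(x - 2 * lam (2*h+3)))
      ((fun x : ℝ => -1/(x - lam (2*h+3)))^[h] 0) = tn h 0 / tn h 1 := by
  rw [tm1_iter h h le_rfl, lam_eq]
  show -1/(sn h h / sn h (h+1) - 2 * (2 * Real.cos (th h))) = tn h 0 / tn h 1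
  have n1 : sn h (h+1) ≠ 0 := ne_of_gt (sn_pos h (by omega) (by omega))
  have t0 : 0 < tn h 0 := tn_pos h (by omega)
  have t1 : 0 < tn h 1 := tn_pos h (by omega)
  have hD := Dpos h
  have hb := base_id h
  rw [div_sub' n1]
  rw [show sn h h - sn h (h+1) * (2 * (2 * Real.cos (th h)))
      = -(4 * Real.cos (th h) * sn h (h+1) - sn h h) from by ring]
  rw [div_div_eq_mul_div, neg_one_mul, neg_div, div_neg, neg_neg]
  rw [div_eq_div_iff (ne_of_gt hD) (ne_of_gt t1)]
  linarith [hb]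

lemma a_iter (h : ℕ) : ∀ i ≤ h + 1,
    (fun x : ℝ => -1/(x - lam (2*h+3)))^[i]
      ((fun x : ℝ => -1/(x - 2 * lam (2*h+3)))
        ((fun x : ℝ => -1/(x - lam (2*h+3)))^[h] 0)) = tn h i / tn h (i+1) := by
  intro i
  induction i with
  | zero => intro _; exact v_eq h
  | succ i ih =>
    intro hi
    rw [Function.iterate_succ_apply', ih (by omega), lam_eq]
    have n1 : tn h (i+1) ≠ 0 := ne_of_gt (tn_pos h (by omega))
    have n2 : tn h (i+2) ≠ 0 := ne_of_gt (tn_pos h (by omega))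
    have hr := tn_rec h i
    show -1/(tn h i / tn h (i+1) - 2 * Real.cos (th h)) = tn h (i+1) / tn h (i+2)
    rw [div_sub' n1]
    field_simp
    rw [show tn h i - tn h (i+1) * 2 * Real.cos (th h) = -tn h (i+2) from by linarith]
    field_simp

/-- for odd `q = 2h+3` with `h ≥ 1`, with
`θ_{-1}(x) = -1/(x-λ_q)`, `θ_{-2}(x) = -1/(x-2λ_q)`, `θ_1(x) = -1/(x+λ_q)`,
`b_i = θ_{-1}^{∘i}(0) - λ_q` and `a_i = θ_{-1}^{∘i}(θ_{-2}(θ_{-1}^{∘h}(0))) - λ_q`: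
`(ST)^{h-i} · (-λ_q/2) = a_i` for `0 ≤ i ≤ h`;
`(ST)^{h+1-i} · (θ_1^{∘h}(0)) = b_i` for `1 ≤ i ≤ h`; and the points interleave
strictly: `-λ_q = b_0 < a_0 < b_1 < a_1 < ⋯ < b_h < a_h = -λ_q/2`. -/
theorem stmt10 (h q : ℕ) (hh : 1 ≤ h) (hq : q = 2 * h + 3) :
    let t1 : ℝ → ℝ := fun x => -1 / (x + lam q)
    let tm1 : ℝ → ℝ := fun x => -1 / (x - lam q)
    let tm2 : ℝ → ℝ := fun x => -1 / (x - 2 * lam q)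
    let b : ℕ → ℝ := fun i => tm1^[i] 0 - lam q
    let a : ℕ → ℝ := fun i => tm1^[i] (tm2 (tm1^[h] 0)) - lam q
    (∀ i ≤ h, t1^[h - i] (-(lam q) / 2) = a i) ∧
    (∀ i, 1 ≤ i → i ≤ h → t1^[h + 1 - i] (t1^[h] 0) = b i) ∧
    b 0 = -(lam q) ∧ a h = -(lam q) / 2 ∧
    (∀ i ≤ h, b i < a i) ∧ (∀ i, i < h → a i < b (i + 1)) := by
  subst hq
  intro t1 tm1 tm2 b a
  have ht1 : t1 = fun x : ℝ => -1 / (x + lam (2*h+3)) := rfl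
  have hbd : ∀ i, b i = (fun x : ℝ => -1/(x - lam (2*h+3)))^[i] 0 - lam (2*h+3) := by
    intro i
    show (fun x : ℝ => -1 / (x - lam (2*h+3)))^[i] 0 - lam (2*h+3) = _
    norm_num
  have had : ∀ i, a i = (fun x : ℝ => -1/(x - lam (2*h+3)))^[i]
      ((fun x : ℝ => -1/(x - 2 * lam (2*h+3)))
        ((fun x : ℝ => -1/(x - lam (2*h+3)))^[h] 0)) - lam (2*h+3) := by
    intro i
    show (fun x : ℝ => -1 / (x - lam (2*h+3)))^[i] _ - lam (2*h+3) = _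
    norm_num
    rfl
  -- formulas
  have hbf : ∀ i ≤ h, b i = -(sn h (i+2) / sn h (i+1)) := by
    intro i hi
    rw [hbd i, tm1_iter h i hi, lam_eq]
    have n1 : sn h (i+1) ≠ 0 := ne_of_gt (sn_pos h (by omega) (by omega))
    have hr := sn_rec h i
    rw [div_sub' n1, show sn h i - sn h (i+1) * (2*Real.cos (th h))
        = -sn h (i+2) from by linarith, neg_div]
  have haf : ∀ i ≤ h, a i = -(tn h (i+2) / tn h (i+1)) := by
    intro i hi
    rw [had i, a_iter h i (by omega), lam_eq]
    have n1 : tn h (i+1) ≠ 0 := ne_of_gt (tn_pos h (by omega))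
    have hr := tn_rec h i
    rw [div_sub' n1, show tn h i - tn h (i+1) * (2*Real.cos (th h))
        = -tn h (i+2) from by linarith, neg_div]
  have hah : a h = -(lam (2*h+3)) / 2 := by
    rw [haf h le_rfl, tn_h1, tn_h2, lam_eq]
    ring
  have t1a : ∀ i, i + 1 ≤ h → t1 (a (i+1)) = a i := by
    intro i hi
    rw [haf (i+1) hi, haf i (by omega), ht1, lam_eq]
    have n1 : tn h (i+1) ≠ 0 := ne_of_gt (tn_pos h (by omega))
    have n2 : tn h (i+2) ≠ 0 := ne_of_gt (tn_pos h (by omega))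
    have hr := tn_rec h (i+1)
    show -1 / (-(tn h (i+3) / tn h (i+2)) + 2 * Real.cos (th h)) = -(tn h (i+2) / tn h (i+1))
    rw [show -(tn h (i+3) / tn h (i+2)) + 2 * Real.cos (th h)
        = (2 * Real.cos (th h) * tn h (i+2) - tn h (i+3)) / tn h (i+2) from by field_simp; ring]
    rw [show 2 * Real.cos (th h) * tn h (i+2) - tn h (i+3) = tn h (i+1) from by
      have := tn_rec h (i+1); linarith]
    rw [div_div_eq_mul_div, neg_one_mul, neg_div, ← neg_div]
  have g1 : ∀ k, k ≤ h → t1^[k] (a h) = a (h - k) := by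
    intro k
    induction k with
    | zero => intro _; simp
    | succ k ih =>
      intro hk
      rw [Function.iterate_succ_apply', ih (by omega),
          show h - k = (h - (k+1)) + 1 from by omega]
      exact t1a _ (by omega)
  refine ⟨?_, ?_, ?_, hah, ?_, ?_⟩
  · intro i hi
    rw [← hah, g1 (h - i) (by omega), show h - (h - i) = i from by omega]
  · intro i h1 h2
    rw [ht1, ← Function.iterate_add_apply,
        show h + 1 - i + h = 2*h+1-i from by omega,
        t1_iter h (2*h+1-i) (by omega), hbf i h2,
        show 2*h+1-i = 2*h+3-(i+2) from by omega,
        show 2*h+3-(i+2)+1 = 2*h+3-(i+1) from by omega,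
        sn_symm h (show i+2 ≤ 2*h+3 by omega), sn_symm h (show i+1 ≤ 2*h+3 by omega)]
  · rw [hbd 0]; simp
  · intro i hi
    rw [hbf i hi, haf i hi, neg_lt_neg_iff,
        div_lt_div_iff₀ (tn_pos h (show i+1 ≤ 2*h+2 by omega))
          (sn_pos h (show 1 ≤ i+1 by omega) (show i+1 ≤ 2*h+2 by omega))]
    linarith [interleave1 h i, prodpos h]
  · intro i hi
    rw [haf i (by omega), hbf (i+1) (by omega), neg_lt_neg_iff,
        div_lt_div_iff₀ (sn_pos h (show 1 ≤ i+2 by omega) (show i+2 ≤ 2*h+2 by omega))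
          (tn_pos h (show i+1 ≤ 2*h+2 by omega))]
    linarith [interleave2 h i, prodpos h]
end

section
/- Let q = 2h+2 with h ≥ 2 an integer, λ_q = 2 cos(π/q), θ_n(x) = −1/(x + n λ_q), and let c_i = T^{−1}(S T^{−1})^{i} · 0 for 1 ≤ i ≤ h (so c_1 < c_2 < ⋯ < c_h = −λ_q/2). Define the open intervals I_i = (c_i, λ_q/4) and I_{−i} = −I_i = (−λ_q/4, −c_i) for 1 ≤ i ≤ h. Then: (a) θ_n([c_i, λ_q/4]) ⊆ I_h for every n ≥ 2 and 1 ≤ i ≤ h; (b) θ_{−n}([c_i, λ_q/4]) ⊆ I_{−h} for every n ≥ 1 and 1 ≤ i ≤ h; (c) θ_1(I_i) ⊆ I_{i−1} for every 2 ≤ i ≤ h; and the mirror statements hold: θ_{−n}([−λ_q/4, −c_i]) ⊆ I_{−h} for n ≥ 2, θ_n([−λ_q/4, −c_i]) ⊆ I_h for n ≥ 1, and θ_{−1}(I_{−i}) ⊆ I_{−(i−1)} for 2 ≤ i ≤ h. -/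
set_option maxHeartbeats 1000000


private lemma aux3 (L D : ℝ) (h2 : 3 ≤ L^2) (h0 : 0 < L) (hD : 3*L/4 ≤ D) :
    -(L/2) < -1/D ∧ -1/D < 0 := by
  have hDpos : 0 < D := lt_of_lt_of_le (by positivity) hD
  constructor
  · rw [neg_div, neg_lt_neg_iff, div_lt_div_iff₀ hDpos two_pos]
    nlinarith
  · exact div_neg_of_neg_of_pos (by norm_num) hDpos


/-- for even `q = 2h+2` with `h ≥ 2`, with
`c_i = T^{-1}(ST^{-1})^i · 0` and `θ_n(x) = -1/(x + nλ_q)`,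
`I_i = (c_i, λ_q/4)`, `I_{-i} = (-λ_q/4, -c_i)`:
(a) `θ_n([c_i, λ_q/4]) ⊆ I_h` for `n ≥ 2`, `1 ≤ i ≤ h`;
(b) `θ_{-n}([c_i, λ_q/4]) ⊆ I_{-h}` for `n ≥ 1`, `1 ≤ i ≤ h`;
(c) `θ_1(I_i) ⊆ I_{i-1}` for `2 ≤ i ≤ h`;
and the mirror statements. -/
theorem stmt11 (h q : ℕ) (hh : 2 ≤ h) (hq : q = 2 * h + 2) :
    let c : ℕ → ℝ := fun i => (fun x : ℝ => -1 / (x - lam q))^[i] 0 - lam q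
    let th : ℤ → ℝ → ℝ := fun n x => -1 / (x + (n : ℝ) * lam q)
    (∀ n : ℤ, 2 ≤ n → ∀ i : ℕ, 1 ≤ i → i ≤ h →
      ∀ x ∈ Set.Icc (c i) (lam q / 4), th n x ∈ Set.Ioo (c h) (lam q / 4)) ∧
    (∀ n : ℤ, 1 ≤ n → ∀ i : ℕ, 1 ≤ i → i ≤ h →
      ∀ x ∈ Set.Icc (c i) (lam q / 4),
        th (-n) x ∈ Set.Ioo (-(lam q) / 4) (-(c h))) ∧
    (∀ i : ℕ, 2 ≤ i → i ≤ h →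
      ∀ x ∈ Set.Ioo (c i) (lam q / 4), th 1 x ∈ Set.Ioo (c (i - 1)) (lam q / 4)) ∧
    (∀ n : ℤ, 2 ≤ n → ∀ i : ℕ, 1 ≤ i → i ≤ h →
      ∀ x ∈ Set.Icc (-(lam q) / 4) (-(c i)),
        th (-n) x ∈ Set.Ioo (-(lam q) / 4) (-(c h))) ∧
    (∀ n : ℤ, 1 ≤ n → ∀ i : ℕ, 1 ≤ i → i ≤ h →
      ∀ x ∈ Set.Icc (-(lam q) / 4) (-(c i)), th n x ∈ Set.Ioo (c h) (lam q / 4)) ∧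
    (∀ i : ℕ, 2 ≤ i → i ≤ h →
      ∀ x ∈ Set.Ioo (-(lam q) / 4) (-(c i)),
        th (-1) x ∈ Set.Ioo (-(lam q) / 4) (-(c (i - 1)))) := by
  intro c th
  have hc_def : ∀ i : ℕ, c i = (fun x : ℝ => -1 / (x - lam q))^[i] 0 - lam q := fun _ => rfl
  have hth_def : ∀ (n : ℤ) (x : ℝ), th n x = -1 / (x + (n : ℝ) * lam q) := fun _ _ => rfl
  clear_value c th
  set L : ℝ := lam q with hL
  set θ : ℝ := Real.pi / q with hθ
  have hq6 : 6 ≤ q := by omega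
  have hqR : (q : ℝ) = 2 * h + 2 := by rw [hq]; push_cast; ring
  have hqpos : (0:ℝ) < q := by positivity
  have θpos : 0 < θ := by rw [hθ]; exact div_pos Real.pi_pos hqpos
  have hLcos : L = 2 * Real.cos θ := by rw [hL, hθ]; rfl
  have θle : θ ≤ Real.pi / 6 := by
    rw [hθ]
    have h6 : (6:ℝ) ≤ q := by exact_mod_cast hq6
    gcongr
  have hcos : Real.sqrt 3 / 2 ≤ Real.cos θ := by
    rw [show Real.sqrt 3 / 2 = Real.cos (Real.pi/6) by rw [Real.cos_pi_div_six]]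
    exact Real.cos_le_cos_of_nonneg_of_le_pi θpos.le
      (by linarith [Real.pi_pos]) θle
  have hs3 : Real.sqrt 3 ^ 2 = 3 := Real.sq_sqrt (by norm_num)
  have hs3nn : 0 ≤ Real.sqrt 3 := Real.sqrt_nonneg 3
  have Lpos : 0 < L := by nlinarith
  have Lsq : 3 ≤ L ^ 2 := by nlinarith
  set s : ℕ → ℝ := fun k => Real.sin (k * θ) with hs
  clear_value L θ s
  have hspos : ∀ k : ℕ, 1 ≤ k → k ≤ h + 2 → 0 < s k := by
    intro k hk1 hk2
    simp only [hs]
    have hk1R : (1:ℝ) ≤ k := by exact_mod_cast hk1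
    have hkq : (k:ℝ) < q := by
      have : k < q := by omega
      exact_mod_cast this
    apply Real.sin_pos_of_pos_of_lt_pi
    · nlinarith
    · have h1 : (k:ℝ) * θ < q * θ := by
        apply mul_lt_mul_of_pos_right hkq θpos
      have h2 : (q:ℝ) * θ = Real.pi := by
        rw [hθ]; field_simp
      linarith
  have hrec : ∀ k : ℕ, s (k+2) = L * s (k+1) - s k := by
    intro k
    simp only [hs]
    push_cast
    rw [show ((k:ℝ)+2)*θ = ((k:ℝ)+1)*θ + θ by ring,
        show (k:ℝ)*θ = ((k:ℝ)+1)*θ - θ by ring,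
        Real.sin_add, Real.sin_sub, hLcos]
    ring
  have hd : ∀ i : ℕ, i ≤ h → (fun x : ℝ => -1 / (x - L))^[i] 0 = s i / s (i+1) := by
    intro i
    induction i with
    | zero =>
      intro _
      simp [hs]
    | succ i ih =>
      intro hi
      have hi' : i ≤ h := Nat.le_of_succ_le hi
      have h1 : 0 < s (i+1) := hspos _ (by omega) (by omega)
      have h2 : 0 < s (i+2) := hspos _ (by omega) (by omega)
      rw [Function.iterate_succ_apply', ih hi']
      show -1 / (s i / s (i+1) - L) = s (i+1) / s (i+1+1)
      have e1 : s i / s (i+1) - L = -(s (i+2) / s (i+1)) := by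
        have := hrec i
        field_simp
        linarith
      rw [e1, div_neg, neg_div, neg_neg, one_div_div]
  have hcf : ∀ i : ℕ, i ≤ h → c i = -(s (i+2) / s (i+1)) := by
    intro i hi
    have h1 : 0 < s (i+1) := hspos _ (by omega) (by omega)
    rw [hc_def, hd i hi]
    have := hrec i
    field_simp
    linarith
  have hclt : ∀ i : ℕ, i ≤ h → c i < 0 := by
    intro i hi
    have h1 : 0 < s (i+1) := hspos _ (by omega) (by omega)
    have h2 : 0 < s (i+2) := hspos _ (by omega) (by omega)
    rw [hcf i hi]
    have : 0 < s (i+2) / s (i+1) := div_pos h2 h1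
    linarith
  have hcgt : ∀ i : ℕ, 1 ≤ i → i ≤ h → -L < c i := by
    intro i hi1 hi
    have h0 : 0 < s i := hspos _ hi1 (by omega)
    have h1 : 0 < s (i+1) := hspos _ (by omega) (by omega)
    rw [hcf i hi, neg_lt_neg_iff, div_lt_iff₀ h1]
    have := hrec i
    linarith
  have hpi2 : ((h:ℝ)+1) * θ = Real.pi / 2 := by
    rw [hθ, hqR]
    have h2 : (2*(h:ℝ)+2) ≠ 0 := by positivity
    field_simp
  have hch : c h = -(L/2) := by
    rw [hcf h le_rfl]
    have e1 : s (h+1) = 1 := by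
      simp only [hs]; push_cast
      rw [hpi2, Real.sin_pi_div_two]
    have e2 : s (h+2) = L / 2 := by
      simp only [hs]; push_cast
      rw [show ((h:ℝ)+2)*θ = (((h:ℝ)+1)*θ) + θ by ring, hpi2, Real.sin_add,
          Real.sin_pi_div_two, Real.cos_pi_div_two, hLcos]
      ring
    rw [e1, e2]
    norm_num
  have hcc : ∀ j : ℕ, j + 1 ≤ h → c j * (c (j+1) + L) = -1 := by
    intro j hj
    have h1 : 0 < s (j+1) := hspos _ (by omega) (by omega)
    have h2 : 0 < s (j+2) := hspos _ (by omega) (by omega)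
    rw [hcf j (by omega), hcf (j+1) (by omega)]
    simp only [show j+1+2 = j+3 from rfl, show j+1+1 = j+2 from rfl]
    have hr := hrec (j+1)
    simp only [show j+1+2 = j+3 from rfl, show j+1+1 = j+2 from rfl] at hr
    field_simp
    linear_combination hr
  -- the six statements
  refine ⟨?_, ?_, ?_, ?_, ?_, ?_⟩
  · -- (a)
    intro n hn i hi1 hih x hx
    have hn2 : (2:ℝ) ≤ (n:ℝ) := by exact_mod_cast hn
    have hxl : -L < x := lt_of_lt_of_le (hcgt i hi1 hih) hx.1
    have hD : 3*L/4 ≤ x + (n:ℝ)*L := by nlinarith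
    obtain ⟨hA, hB⟩ := aux3 L _ Lsq Lpos hD
    rw [hth_def]
    exact ⟨by rw [hch]; exact hA, by linarith⟩
  · -- (b)
    intro n hn i hi1 hih x hx
    have hn1 : (1:ℝ) ≤ (n:ℝ) := by exact_mod_cast hn
    have hx2 : x ≤ L/4 := hx.2
    have hE : 3*L/4 ≤ (n:ℝ)*L - x := by nlinarith
    obtain ⟨hA, hB⟩ := aux3 L _ Lsq Lpos hE
    have heq : th (-n) x = -(-1 / ((n:ℝ)*L - x)) := by
      rw [hth_def]
      push_cast
      rw [show x + -(n:ℝ)*L = -((n:ℝ)*L - x) by ring, div_neg]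
    rw [heq]
    constructor
    · linarith
    · rw [hch]; linarith
  · -- (c)
    intro i hi2 hih x hx
    obtain ⟨j, rfl⟩ : ∃ j, i = j + 1 := ⟨i - 1, by omega⟩
    simp only [Nat.add_sub_cancel]
    have hcj : c j < 0 := hclt j (by omega)
    have hci : -L < c (j+1) := hcgt _ (by omega) hih
    have hx1 : c (j+1) < x := hx.1
    have hx2 : x < L/4 := hx.2
    have hxpos : 0 < x + L := by linarith
    have key := hcc j hih
    have heq : th 1 x = -1 / (x + L) := by
      rw [hth_def]; norm_num
    rw [heq]
    constructor
    · rw [lt_div_iff₀ hxpos]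
      have hne : c j * (x - c (j+1)) < 0 :=
        mul_neg_of_neg_of_pos hcj (by linarith)
      nlinarith
    · have : -1 / (x + L) < 0 := div_neg_of_neg_of_pos (by norm_num) hxpos
      linarith
  · -- (d)
    intro n hn i hi1 hih x hx
    have hn2 : (2:ℝ) ≤ (n:ℝ) := by exact_mod_cast hn
    have hci : -L < c i := hcgt i hi1 hih
    have hx2 : x ≤ -(c i) := hx.2
    have hE : 3*L/4 ≤ (n:ℝ)*L - x := by nlinarith
    obtain ⟨hA, hB⟩ := aux3 L _ Lsq Lpos hE
    have heq : th (-n) x = -(-1 / ((n:ℝ)*L - x)) := by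
      rw [hth_def]
      push_cast
      rw [show x + -(n:ℝ)*L = -((n:ℝ)*L - x) by ring, div_neg]
    rw [heq]
    constructor
    · linarith
    · rw [hch]; linarith
  · -- (e)
    intro n hn i hi1 hih x hx
    have hn1 : (1:ℝ) ≤ (n:ℝ) := by exact_mod_cast hn
    have hx1 : -L/4 ≤ x := hx.1
    have hD : 3*L/4 ≤ x + (n:ℝ)*L := by nlinarith
    obtain ⟨hA, hB⟩ := aux3 L _ Lsq Lpos hD
    rw [hth_def]
    exact ⟨by rw [hch]; exact hA, by linarith⟩
  · -- (f)
    intro i hi2 hih x hx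
    obtain ⟨j, rfl⟩ : ∃ j, i = j + 1 := ⟨i - 1, by omega⟩
    simp only [Nat.add_sub_cancel]
    have hcj : c j < 0 := hclt j (by omega)
    have hci : -L < c (j+1) := hcgt _ (by omega) hih
    have hx1 : -L/4 < x := hx.1
    have hx2 : x < -(c (j+1)) := hx.2
    have hLx : 0 < L - x := by linarith
    have key := hcc j hih
    have heq : th (-1) x = 1 / (L - x) := by
      rw [hth_def]
      push_cast
      rw [show x + (-1:ℝ)*L = -(L - x) by ring, div_neg, neg_div, neg_neg]
    rw [heq]
    constructor
    · have : 0 < 1 / (L - x) := by positivity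
      linarith
    · rw [div_lt_iff₀ hLx]
      have hpos : 0 < (-(c j)) * (-x - c (j+1)) :=
        mul_pos (by linarith) (by linarith)
      nlinarith
end

section
/- Let q = 2h+2 with h ≥ 1 an integer, λ_q = 2 cos(π/q), I_q = [−λ_q/2, λ_q/2], f_q the Hurwitz–Nakada map and θ_n(x) = −1/(x + n λ_q). Put φ_i = θ_1^{∘(h−i)}(0) for 0 ≤ i ≤ h (so φ_0 = −λ_q/2 < φ_1 < ⋯ < φ_h = 0) and Φ_i = [φ_{i−1}, φ_i] for 1 ≤ i ≤ h. Then for every 1 ≤ i ≤ h and every x in the open interval (φ_{i−1}, φ_i): (a) θ_n(x) ∈ (φ_{h−1}, 0) for every n ≥ 2; (b) θ_n(x) ∈ (0, −φ_{h−1}) for every n ≤ −1; (c) if i ≥ 2 then θ_1(x) ∈ (φ_{i−2}, φ_{i−1}); (d) if i = 1 then θ_1(x) < −λ_q/2, so θ_1(x) ∉ I_q; (e) the preimage set {y ∈ I_q∖{0} : f_q(y) = x} equals {θ_n(x) : n ∈ ℤ∖{0}} if i ≥ 2, and equals {θ_n(x) : n ≥ 2 or n ≤ −1} if i = 1. -/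
/-- The modified floor `⌊t⌋′`: the unique integer `n` with `n < t ≤ n+1` if
`t > 0`, and `n ≤ t < n+1` if `t ≤ 0`. -/
noncomputable def mfloor (t : ℝ) : ℤ := if 0 < t then ⌈t⌉ - 1 else ⌊t⌋

/-- The nearest-`λ_q`-multiple function `⟨x⟩ = ⌊x/λ_q + 1/2⌋′`. -/
noncomputable def nearLam (q : ℕ) (x : ℝ) : ℤ := mfloor (x / lam q + 1 / 2)

/-- The Hurwitz–Nakada map `f_q(x) = -1/x - ⟨-1/x⟩·λ_q`, `f_q(0) = 0`. -/
noncomputable def fq (q : ℕ) (x : ℝ) : ℝ :=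
  if x = 0 then 0 else -1 / x - (nearLam q (-1 / x) : ℝ) * lam q

open Real

lemma mfloor_add_int {t : ℝ} (h0 : 0 < t) (h1 : t < 1) (n : ℤ) :
    mfloor (t + n) = n := by
  unfold mfloor
  have hc : ⌈t⌉ = 1 := by
    apply le_antisymm
    · exact Int.ceil_le.mpr (by exact_mod_cast h1.le : t ≤ ((1:ℤ):ℝ))
    · exact Int.lt_iff_add_one_le.mp (Int.lt_ceil.mpr (by exact_mod_cast h0 : ((0:ℤ):ℝ) < t))
  rcases le_or_gt 0 n with hn | hn
  · have : (0:ℝ) < t + n := by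
      have : (0:ℝ) ≤ n := by exact_mod_cast hn
      linarith
    rw [if_pos this, Int.ceil_add_intCast, hc]; ring
  · have hn1 : n + 1 ≤ 0 := by omega
    have hn1' : (n:ℝ) + 1 ≤ 0 := by exact_mod_cast hn1
    rw [if_neg (by push_neg; linarith), Int.floor_add_intCast,
      Int.floor_eq_zero_iff.mpr ⟨h0.le, h1⟩]; ring

lemma qR (h q : ℕ) (hq : q = 2 * h + 2) : (q:ℝ) = 2*h+2 := by
  exact_mod_cast congrArg (Nat.cast : ℕ → ℝ) hq

lemma qpos (h q : ℕ) (hq : q = 2 * h + 2) : (0:ℝ) < q := by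
  rw [qR h q hq]; positivity

lemma half (h q : ℕ) (hq : q = 2 * h + 2) : ((h:ℝ)+1) * π / q = π/2 := by
  rw [qR h q hq]; field_simp

lemma sin_pos' (h q : ℕ) (hq : q = 2 * h + 2) :
    ∀ k : ℕ, 1 ≤ k → k ≤ h+1 → 0 < Real.sin ((k:ℝ)*π/q) := by
  intro k h1 h2
  apply Real.sin_pos_of_pos_of_lt_pi
  · have : (0:ℝ) < (k:ℝ) := by exact_mod_cast h1
    have := qpos h q hq
    positivity
  · have hk : (k:ℝ) ≤ (h:ℝ)+1 := by exact_mod_cast h2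
    have : (k:ℝ)*π/q ≤ ((h:ℝ)+1)*π/q := by
      gcongr
    calc (k:ℝ)*π/q ≤ π/2 := this.trans_eq (half h q hq)
      _ < π := by linarith [Real.pi_pos]

lemma sin_rec (h q : ℕ) (hq : q = 2 * h + 2) : ∀ k : ℕ, Real.sin (((k:ℝ)+2)*π/q) =
    lam q * Real.sin (((k:ℝ)+1)*π/q) - Real.sin ((k:ℝ)*π/q) := by
  intro k
  have e1 : ((k:ℝ)+2)*π/q = ((k:ℝ)+1)*π/q + π/q := by ring
  have e2 : (k:ℝ)*π/q = ((k:ℝ)+1)*π/q - π/q := by ring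
  rw [e1, e2, Real.sin_add, Real.sin_sub, lam]; ring

lemma sin_le' (h q : ℕ) (hq : q = 2 * h + 2) : ∀ k : ℕ, k + 1 ≤ h + 1 →
    Real.sin ((k:ℝ)*π/q) ≤ Real.sin (((k:ℝ)+2)*π/q) := by
  intro k hk
  have e1 : ((k:ℝ)+2)*π/q = ((k:ℝ)+1)*π/q + π/q := by ring
  have e2 : (k:ℝ)*π/q = ((k:ℝ)+1)*π/q - π/q := by ring
  have hcos : 0 ≤ Real.cos (((k:ℝ)+1)*π/q) := by
    apply Real.cos_nonneg_of_mem_Icc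
    constructor
    · have hq0 := qpos h q hq
      have : (0:ℝ) ≤ ((k:ℝ)+1)*π/q := by positivity
      linarith [Real.pi_pos]
    · calc ((k:ℝ)+1)*π/q ≤ ((h:ℝ)+1)*π/q := by
            gcongr
            omega
      _ = π/2 := half h q hq
  have hsin : 0 ≤ Real.sin (π/q) := by
    apply Real.sin_nonneg_of_nonneg_of_le_pi
    · have := qpos h q hq
      positivity
    · rw [qR h q hq]
      rw [div_le_iff₀ (by positivity)]
      nlinarith [Real.pi_pos]
  rw [e1, e2, Real.sin_add, Real.sin_sub]
  nlinarith [mul_nonneg hcos hsin]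

lemma lam_pos (h q : ℕ) (hh : 1 ≤ h) (hq : q = 2 * h + 2) : 0 < lam q := by
  unfold lam
  have hq0 := qpos h q hq
  have hh1 : (1:ℝ) ≤ h := by exact_mod_cast hh
  have hlt : π/q < π/2 := by
    rw [div_lt_div_iff₀ hq0 (by norm_num), qR h q hq]
    nlinarith [Real.pi_pos]
  have h2 : 0 < Real.cos (π/q) := by
    apply Real.cos_pos_of_mem_Ioo
    constructor
    · have : (0:ℝ) < π/q := by positivity
      linarith [Real.pi_pos]
    · exact hlt
  linarith

lemma lam_le_two (q : ℕ) : lam q ≤ 2 := by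
  unfold lam
  nlinarith [Real.cos_le_one (π/q)]

lemma two_le_lam_sq (h q : ℕ) (hh : 1 ≤ h) (hq : q = 2 * h + 2) :
    2 ≤ lam q ^ 2 := by
  unfold lam
  have hq0 := qpos h q hq
  have hh1 : (1:ℝ) ≤ h := by exact_mod_cast hh
  have h4 : (4:ℝ) ≤ q := by rw [qR h q hq]; linarith
  have hle : π/q ≤ π/4 := by
    rw [div_le_div_iff₀ hq0 (by norm_num)]
    nlinarith [Real.pi_pos]
  have hpi4 : π/4 ≤ π := by linarith [Real.pi_pos]
  have hcos : Real.cos (π/4) ≤ Real.cos (π/q) := by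
    exact Real.cos_le_cos_of_nonneg_of_le_pi (by positivity) hpi4 hle
  rw [Real.cos_pi_div_four] at hcos
  nlinarith [Real.sq_sqrt (by norm_num : (0:ℝ) ≤ 2), Real.sqrt_nonneg 2]

lemma iter_formula (h q : ℕ) (hh : 1 ≤ h) (hq : q = 2 * h + 2) :
    ∀ k : ℕ, k ≤ h → (fun x : ℝ => -1 / (x + lam q))^[k] 0 =
      -Real.sin ((k:ℝ)*π/q) / Real.sin (((k:ℝ)+1)*π/q) := by
  intro k
  induction k with
  | zero => intro _; norm_num
  | succ k ih =>
    intro hk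
    have hk' : k ≤ h := by omega
    rw [Function.iterate_succ_apply', ih hk']
    have h1 : 0 < Real.sin (((k:ℝ)+1)*π/q) := by
      have := sin_pos' h q hq (k+1) (by omega) (by omega)
      push_cast at this; exact this
    have h2 : 0 < Real.sin (((k:ℝ)+2)*π/q) := by
      have := sin_pos' h q hq (k+2) (by omega) (by omega)
      push_cast at this; exact this
    have hr := sin_rec h q hq k
    push_cast
    rw [show ((k:ℝ)+1+1) = (k:ℝ)+2 by ring]
    have hd : -Real.sin ((k:ℝ)*π/q) / Real.sin (((k:ℝ)+1)*π/q) + lam q =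
        Real.sin (((k:ℝ)+2)*π/q) / Real.sin (((k:ℝ)+1)*π/q) := by
      rw [hr, sub_div, mul_div_cancel_right₀ _ h1.ne']; ring
    rw [hd]
    rw [div_div_eq_mul_div]
    field_simp

lemma iter_nonpos (h q : ℕ) (hh : 1 ≤ h) (hq : q = 2 * h + 2) :
    ∀ k : ℕ, k ≤ h → (fun x : ℝ => -1 / (x + lam q))^[k] 0 ≤ 0 := by
  intro k hk
  rw [iter_formula h q hh hq k hk]
  have h1 : 0 < Real.sin (((k:ℝ)+1)*π/q) := by
    have := sin_pos' h q hq (k+1) (by omega) (by omega)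
    push_cast at this; exact this
  have h0 : 0 ≤ Real.sin ((k:ℝ)*π/q) := by
    rcases Nat.eq_zero_or_pos k with rfl | hk0
    · norm_num
    · exact (sin_pos' h q hq k hk0 (by omega)).le
  have := div_nonneg h0 h1.le
  rw [neg_div]; linarith

lemma iter_ge (h q : ℕ) (hh : 1 ≤ h) (hq : q = 2 * h + 2) :
    ∀ k : ℕ, k ≤ h → -lam q/2 ≤ (fun x : ℝ => -1 / (x + lam q))^[k] 0 := by
  intro k hk
  rw [iter_formula h q hh hq k hk]
  have h1 : 0 < Real.sin (((k:ℝ)+1)*π/q) := by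
    have := sin_pos' h q hq (k+1) (by omega) (by omega)
    push_cast at this; exact this
  have hr := sin_rec h q hq k
  have hle := sin_le' h q hq k (by omega)
  rw [neg_div, neg_div, neg_le_neg_iff, div_le_iff₀ h1]
  nlinarith

lemma iter_h_eq (h q : ℕ) (hh : 1 ≤ h) (hq : q = 2 * h + 2) :
    (fun x : ℝ => -1 / (x + lam q))^[h] 0 = -lam q/2 := by
  rw [iter_formula h q hh hq h le_rfl]
  have e1 : ((h:ℝ)+1)*π/q = π/2 := half h q hq
  have e2 : (h:ℝ)*π/q = π/2 - π/q := by
    rw [← e1]; ring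
  rw [e1, e2, Real.sin_pi_div_two, Real.sin_pi_div_two_sub, lam]
  ring


set_option maxHeartbeats 2000000 in
/-- for even `q = 2h+2` with `h ≥ 1`, with
`φ_i = θ_1^{∘(h-i)}(0)` and `θ_n(x) = -1/(x + nλ_q)`, for `1 ≤ i ≤ h` and
`x ∈ (φ_{i-1}, φ_i)`:
(a) `θ_n(x) ∈ (φ_{h-1}, 0)` for `n ≥ 2`;
(b) `θ_n(x) ∈ (0, -φ_{h-1})` for `n ≤ -1`;
(c) if `i ≥ 2` then `θ_1(x) ∈ (φ_{i-2}, φ_{i-1})`;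
(d) if `i = 1` then `θ_1(x) < -λ_q/2`, so `θ_1(x) ∉ I_q`;
(e) the `f_q`-preimage set of `x` in `I_q ∖ {0}` equals `{θ_n(x) : n ≠ 0}` if
`i ≥ 2`, and `{θ_n(x) : n ≥ 2 or n ≤ -1}` if `i = 1`. -/
theorem stmt12 (h q : ℕ) (hh : 1 ≤ h) (hq : q = 2 * h + 2) :
    let th : ℤ → ℝ → ℝ := fun n x => -1 / (x + (n : ℝ) * lam q)
    let φ : ℕ → ℝ := fun i => (fun x : ℝ => -1 / (x + lam q))^[h - i] 0
    ∀ i : ℕ, 1 ≤ i → i ≤ h → ∀ x ∈ Set.Ioo (φ (i - 1)) (φ i),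
      (∀ n : ℤ, 2 ≤ n → th n x ∈ Set.Ioo (φ (h - 1)) 0) ∧
      (∀ n : ℤ, n ≤ -1 → th n x ∈ Set.Ioo 0 (-(φ (h - 1)))) ∧
      (2 ≤ i → th 1 x ∈ Set.Ioo (φ (i - 2)) (φ (i - 1))) ∧
      (i = 1 → th 1 x < -(lam q) / 2 ∧
        th 1 x ∉ Set.Icc (-(lam q) / 2) (lam q / 2)) ∧
      (2 ≤ i →
        {y : ℝ | y ∈ Set.Icc (-(lam q) / 2) (lam q / 2) ∧ y ≠ 0 ∧ fq q y = x} =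
          {y : ℝ | ∃ n : ℤ, n ≠ 0 ∧ y = th n x}) ∧
      (i = 1 →
        {y : ℝ | y ∈ Set.Icc (-(lam q) / 2) (lam q / 2) ∧ y ≠ 0 ∧ fq q y = x} =
          {y : ℝ | ∃ n : ℤ, (2 ≤ n ∨ n ≤ -1) ∧ y = th n x}) := by
  intro th φ i hi1 hih x hx
  have hth : ∀ (n : ℤ) (z : ℝ), th n z = -1 / (z + (n:ℝ) * lam q) := fun _ _ => rfl
  have hφd : ∀ j : ℕ, φ j = (fun x : ℝ => -1 / (x + lam q))^[h - j] 0 := fun _ => rfl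
  have hlp : 0 < lam q := lam_pos h q hh hq
  have hl2 : lam q ≤ 2 := lam_le_two q
  have hsq : 2 ≤ lam q ^ 2 := two_le_lam_sq h q hh hq
  have hub : ∀ j : ℕ, φ j ≤ 0 := fun j =>
    iter_nonpos h q hh hq (h - j) (Nat.sub_le h j)
  have hlb : ∀ j : ℕ, -lam q/2 ≤ φ j := fun j =>
    iter_ge h q hh hq (h - j) (Nat.sub_le h j)
  have hφh : φ h = 0 := by rw [hφd, Nat.sub_self]; rfl
  have hφh1 : φ (h - 1) = -1 / lam q := by
    rw [hφd]
    have e : h - (h - 1) = 1 := by omega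
    rw [e, Function.iterate_one, zero_add]
  have hφ0 : φ 0 = -lam q/2 := by
    rw [hφd, Nat.sub_zero]; exact iter_h_eq h q hh hq
  have hgφ : ∀ j : ℕ, 1 ≤ j → j ≤ h → -1 / (φ j + lam q) = φ (j - 1) := by
    intro j h1 h2
    rw [hφd, hφd]
    have e : h - (j - 1) = (h - j) + 1 := by omega
    rw [e, Function.iterate_succ_apply']
  obtain ⟨hx1, hx2⟩ := hx
  have hxu : x < 0 := hx2.trans_le (hub i)
  have hxl : -lam q/2 < x := (hlb (i-1)).trans_lt hx1
  have hinvlam : 1/lam q ≤ lam q/2 := by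
    rw [div_le_div_iff₀ hlp two_pos]; nlinarith
  have gmono : ∀ a b : ℝ, -lam q/2 ≤ a → a < b →
      -1/(a + lam q) < -1/(b + lam q) := by
    intro a b ha hab
    have h1 : 0 < a + lam q := by linarith
    have := one_div_lt_one_div_of_lt h1 (by linarith : a + lam q < b + lam q)
    rw [neg_div, neg_div]; linarith
  -- part (a)
  have parta : ∀ n : ℤ, 2 ≤ n → th n x ∈ Set.Ioo (φ (h - 1)) 0 := by
    intro n hn
    have hn' : (2:ℝ) ≤ (n:ℝ) := by exact_mod_cast hn
    have ht0 : 0 < x + (n:ℝ)*lam q := by nlinarith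
    have hlamt : lam q < x + (n:ℝ)*lam q := by nlinarith
    have hd := one_div_lt_one_div_of_lt hlp hlamt
    rw [hth, hφh1]
    constructor
    · rw [neg_div, neg_div]; linarith
    · rw [neg_div]
      have : 0 < 1/(x + (n:ℝ)*lam q) := by positivity
      linarith
  -- part (b)
  have partb : ∀ n : ℤ, n ≤ -1 → th n x ∈ Set.Ioo 0 (-(φ (h - 1))) := by
    intro n hn
    have hn' : (n:ℝ) ≤ -1 := by exact_mod_cast hn
    have hnt : lam q < -(x + (n:ℝ)*lam q) := by nlinarith
    have hneg : x + (n:ℝ)*lam q < 0 := by nlinarith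
    have hd := one_div_lt_one_div_of_lt hlp hnt
    have e : -1/(x + (n:ℝ)*lam q) = 1/(-(x + (n:ℝ)*lam q)) := by
      rw [div_neg, neg_div]
    rw [hth, hφh1, e]
    constructor
    · have hpos : 0 < -(x + (n:ℝ)*lam q) := by linarith
      positivity
    · rw [neg_div, neg_neg]; linarith
  -- part (c)
  have partc : 2 ≤ i → th 1 x ∈ Set.Ioo (φ (i - 2)) (φ (i - 1)) := by
    intro hi2
    have e1 : th 1 x = -1/(x + lam q) := by rw [hth]; norm_num
    have hg1 : -1/(φ (i-1) + lam q) = φ (i-1-1) := hgφ (i-1) (by omega) (by omega)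
    have e2 : i - 1 - 1 = i - 2 := by omega
    have hg2 : -1/(φ i + lam q) = φ (i - 1) := hgφ i hi1 hih
    rw [e1]
    constructor
    · rw [← e2, ← hg1]; exact gmono _ _ (hlb _) hx1
    · rw [← hg2]; exact gmono _ _ hxl.le hx2
  -- part (d)
  have partd : i = 1 → th 1 x < -(lam q)/2 := by
    intro hi
    subst hi
    have e1 : th 1 x = -1/(x + lam q) := by rw [hth]; norm_num
    have hg : -1/(φ 1 + lam q) = φ 0 := hgφ 1 le_rfl hih
    rw [e1, ← hφ0, ← hg]
    exact gmono _ _ hxl.le hx2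
  -- fq computation
  have hfq : ∀ n : ℤ, n ≠ 0 → x + (n:ℝ)*lam q ≠ 0 ∧ fq q (th n x) = x := by
    intro n hn
    have hne : x + (n:ℝ)*lam q ≠ 0 := by
      rcases lt_or_ge n 0 with h' | h'
      · have hn1 : n ≤ -1 := by omega
        have : (n:ℝ) ≤ -1 := by exact_mod_cast hn1
        nlinarith
      · have : (1:ℝ) ≤ (n:ℝ) := by
          have : 1 ≤ n := by omega
          exact_mod_cast this
        nlinarith
    refine ⟨hne, ?_⟩
    have hy : th n x ≠ 0 := by
      rw [hth]
      exact div_ne_zero (by norm_num) hne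
    have hinv : -1/(th n x) = x + (n:ℝ)*lam q := by
      rw [hth]; field_simp
    simp only [fq, if_neg hy]
    rw [hinv]
    have hnl : nearLam q (x + (n:ℝ)*lam q) = n := by
      rw [nearLam]
      have e : (x + (n:ℝ)*lam q)/lam q + 1/2 = (x/lam q + 1/2) + (n:ℝ) := by
        field_simp
        ring
      have e2 : x/lam q + 1/2 = (x + lam q/2)/lam q := by
        rw [eq_div_iff hlp.ne', add_mul, div_mul_cancel₀ _ hlp.ne']
        ring
      rw [e]
      apply mfloor_add_int
      · rw [e2]
        exact div_pos (by linarith) hlp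
      · rw [e2, div_lt_one hlp]; linarith
    rw [hnl]; ring
  -- membership of θ_n(x) in I_q for n ≥ 2, n ≤ -1, and (if i ≥ 2) n = 1
  have hmem2 : ∀ n : ℤ, 2 ≤ n →
      th n x ∈ Set.Icc (-(lam q)/2) (lam q/2) ∧ th n x ≠ 0 := by
    intro n hn
    obtain ⟨hlo, hhi⟩ := parta n hn
    rw [hφh1] at hlo
    constructor
    · constructor
      · rw [neg_div] at hlo ⊢
        linarith
      · linarith
    · exact ne_of_lt hhi
  have hmemneg : ∀ n : ℤ, n ≤ -1 →
      th n x ∈ Set.Icc (-(lam q)/2) (lam q/2) ∧ th n x ≠ 0 := by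
    intro n hn
    obtain ⟨hlo, hhi⟩ := partb n hn
    rw [hφh1] at hhi
    constructor
    · constructor
      · linarith
      · rw [neg_div, neg_neg] at hhi
        linarith
    · exact ne_of_gt hlo
  -- forward direction of (e)
  have hfwd : ∀ y : ℝ, y ∈ Set.Icc (-(lam q)/2) (lam q/2) → y ≠ 0 → fq q y = x →
      ∃ n : ℤ, n ≠ 0 ∧ y = th n x := by
    intro y hyI hy0 hyf
    simp only [fq, if_neg hy0] at hyf
    refine ⟨nearLam q (-1/y), ?_, ?_⟩
    · intro hn0
      rw [hn0] at hyf
      push_cast at hyf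
      have hyx : -1/y = x := by linarith
      have hxy : x * y = -1 := by
        field_simp [hy0] at hyx
        linarith
      have hy0' : 0 < y := by
        by_contra hc
        push_neg at hc
        nlinarith
      nlinarith [mul_pos (show (0:ℝ) < x + lam q/2 by linarith) hy0',
        mul_le_mul_of_nonneg_left hyI.2 hlp.le, sq_nonneg (lam q - 2)]
    · set n := nearLam q (-1/y) with hn
      have hinv : -1/y = x + (n:ℝ)*lam q := by linarith
      rw [hth, ← hinv]
      field_simp
  constructor
  · exact parta
  constructor
  · exact partb
  constructor
  · exact partc
  constructor
  · intro hi
    refine ⟨partd hi, ?_⟩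
    intro hc
    exact absurd hc.1 (not_le.mpr (partd hi))
  constructor
  · -- i ≥ 2 case of (e)
    intro hi2
    ext y
    simp only [Set.mem_setOf_eq]
    constructor
    · rintro ⟨hyI, hy0, hyf⟩
      exact hfwd y hyI hy0 hyf
    · rintro ⟨n, hn0, rfl⟩
      rcases lt_or_ge n 0 with hneg | hpos
      · have hn1 : n ≤ -1 := by omega
        exact ⟨(hmemneg n hn1).1, (hmemneg n hn1).2, (hfq n hn0).2⟩
      · rcases eq_or_lt_of_le hpos with h0 | h1
        · omega
        · rcases eq_or_lt_of_le (show (1:ℤ) ≤ n by omega) with h1' | h2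
          · subst h1'
            obtain ⟨hlo, hhi⟩ := partc hi2
            refine ⟨⟨?_, ?_⟩, ?_, (hfq 1 (by norm_num)).2⟩
            · exact le_trans (hlb (i-2)) hlo.le
            · exact le_trans hhi.le (le_trans (hub (i-1)) (by positivity))
            · exact ne_of_lt (lt_of_lt_of_le hhi (hub (i-1)))
          · have hn2 : 2 ≤ n := by omega
            exact ⟨(hmem2 n hn2).1, (hmem2 n hn2).2, (hfq n hn0).2⟩
  · -- i = 1 case of (e)
    intro hi
    ext y
    simp only [Set.mem_setOf_eq]
    constructor
    · rintro ⟨hyI, hy0, hyf⟩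
      obtain ⟨n, hn0, hyn⟩ := hfwd y hyI hy0 hyf
      refine ⟨n, ?_, hyn⟩
      have hn1 : n ≠ 1 := by
        intro h1
        subst h1
        rw [hyn] at hyI
        exact absurd hyI.1 (not_le.mpr (partd hi))
      omega
    · rintro ⟨n, hn, rfl⟩
      rcases hn with hn2 | hn1
      · exact ⟨(hmem2 n hn2).1, (hmem2 n hn2).2, (hfq n (by omega)).2⟩
      · exact ⟨(hmemneg n hn1).1, (hmemneg n hn1).2, (hfq n (by omega)).2⟩
end

section
/- Let q = 3 (λ_3 = 1), let s ∈ ℂ with Re(s) > 1/2, let ε ∈ {+1, −1}, and let g : [−1, 1] → ℂ be a bounded function satisfying the eigenvalue-one equation of the reduced transfer operator L_{s,ε}: for every x ∈ [−1, 1], g(x) = Σ_{n=3}^{∞} ((x+n)²)^{−s} g(−1/(x+n)) + ε · Σ_{n=2}^{∞} ((x−n)²)^{−s} g(1/(x−n)) (both series converge absolutely, since g is bounded, Re(s) > 1/2, and the arguments −1/(x+n) ∈ [−1/2, 0) and 1/(x−n) ∈ [−1, 0) lie in [−1,1]). Then g satisfies the four-term functional equation: for every x ∈ [−1, 0], g(x)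 = g(x+1) + ((x+3)²)^{−s} g(−1/(x+3)) − ε · ((x−1)²)^{−s} g(1/(x−1)). -/
open Complex in
lemma stmt15_aux (s : ℂ) (hs : 1 / 2 < s.re) (C : ℝ) (hC : 0 ≤ C) (g : ℝ → ℂ)
    (hb : ∀ y ∈ Set.Icc (-1 : ℝ) 1, ‖g y‖ ≤ C)
    (a t : ℕ → ℝ) (ha : ∀ n : ℕ, (n : ℝ) + 1 ≤ |a n|)
    (ht : ∀ n, t n ∈ Set.Icc (-1 : ℝ) 1) :
    Summable (fun n : ℕ => Complex.exp (-s * (Real.log ((a n) ^ 2) : ℂ)) * g (t n)) := by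
  have hσ : 0 < s.re := by linarith
  apply Summable.of_norm_bounded (g := fun n : ℕ => ((n : ℝ) + 1) ^ (-(2 * s.re)) * C)
  · have h0 : Summable (fun n : ℕ => ((n : ℝ)) ^ (-(2 * s.re))) := by
      rw [Real.summable_nat_rpow]; linarith
    have h1 := (summable_nat_add_iff 1).mpr h0
    refine h1.mul_right C |>.congr fun n => ?_
    push_cast
    ring
  · intro n
    rw [norm_mul, Complex.norm_exp]
    have hre : (-s * (Real.log ((a n) ^ 2) : ℂ)).re = -s.re * Real.log ((a n) ^ 2) := by
      simp [Complex.mul_re]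
    rw [hre]
    have hlog : Real.log ((a n) ^ 2) = 2 * Real.log (a n) := by
      rw [Real.log_pow]; push_cast; ring
    have hpos : (0 : ℝ) < (n : ℝ) + 1 := by positivity
    have hlog2 : Real.log ((n : ℝ) + 1) ≤ Real.log (a n) := by
      have h := Real.log_le_log (by positivity) (ha n)
      rwa [Real.log_abs] at h
    have hE : Real.exp (-s.re * Real.log ((a n) ^ 2)) ≤ ((n : ℝ) + 1) ^ (-(2 * s.re)) := by
      rw [Real.rpow_def_of_pos hpos, hlog]
      apply Real.exp_le_exp.mpr
      nlinarith [hlog2]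
    calc Real.exp (-s.re * Real.log ((a n) ^ 2)) * ‖g (t n)‖
        ≤ Real.exp (-s.re * Real.log ((a n) ^ 2)) * C := by
          exact mul_le_mul_of_nonneg_left (hb _ (ht n)) (Real.exp_pos _).le
      _ ≤ ((n : ℝ) + 1) ^ (-(2 * s.re)) * C := mul_le_mul_of_nonneg_right hE hC

/-- for `q = 3` (`λ_3 = 1`), `Re s > 1/2`, `ε = ±1`, and `g`
bounded on `[-1,1]` satisfying the eigenvalue-one equation of the reduced
transfer operator `L_{s,ε}`, i.e. for every `x ∈ [-1,1]`,
`g(x) = Σ_{n≥3} ((x+n)²)^{-s} g(-1/(x+n)) + ε Σ_{n≥2} ((x-n)²)^{-s} g(1/(x-n))`,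
then `g` satisfies the four-term functional equation
`g(x) = g(x+1) + ((x+3)²)^{-s} g(-1/(x+3)) - ε ((x-1)²)^{-s} g(1/(x-1))`
for every `x ∈ [-1, 0]`. -/
theorem stmt15 (s : ℂ) (hs : 1 / 2 < s.re) (ε : ℂ) (hε : ε = 1 ∨ ε = -1)
    (g : ℝ → ℂ) (hb : ∃ C : ℝ, ∀ x ∈ Set.Icc (-1 : ℝ) 1, ‖g x‖ ≤ C)
    (heq : ∀ x ∈ Set.Icc (-1 : ℝ) 1,
      g x =
        (∑' n : ℕ, Complex.exp (-s * (Real.log ((x + ((n : ℝ) + 3)) ^ 2) : ℂ)) *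
            g (-1 / (x + ((n : ℝ) + 3)))) +
        ε * ∑' n : ℕ, Complex.exp (-s * (Real.log ((x - ((n : ℝ) + 2)) ^ 2) : ℂ)) *
            g (1 / (x - ((n : ℝ) + 2)))) :
    ∀ x ∈ Set.Icc (-1 : ℝ) 0,
      g x = g (x + 1) +
        Complex.exp (-s * (Real.log ((x + 3) ^ 2) : ℂ)) * g (-1 / (x + 3)) -
        ε * Complex.exp (-s * (Real.log ((x - 1) ^ 2) : ℂ)) * g (1 / (x - 1)) := by
  obtain ⟨C, hbC⟩ := hb
  have hC : 0 ≤ C := le_trans (norm_nonneg _) (hbC 0 (by norm_num))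
  intro x hx
  obtain ⟨hx1, hx2⟩ := hx
  -- membership helpers
  have hmem : ∀ w : ℝ, 1 ≤ w → -1 / w ∈ Set.Icc (-1 : ℝ) 1 := by
    intro w hw
    have hw0 : 0 < w := by linarith
    have hinv : 1 / w ≤ 1 := (div_le_one hw0).mpr hw
    have hinv0 : 0 ≤ 1 / w := by positivity
    constructor
    · rw [neg_div]; linarith
    · rw [neg_div]; linarith
  have hmem' : ∀ w : ℝ, 1 ≤ w → 1 / (-w) ∈ Set.Icc (-1 : ℝ) 1 := by
    intro w hw
    have := hmem w hw
    rw [div_neg, ← neg_div]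
    exact this
  -- the two families
  set A : ℕ → ℂ := fun n =>
    Complex.exp (-s * (Real.log ((x + (n : ℝ)) ^ 2) : ℂ)) * g (-1 / (x + (n : ℝ))) with hA
  set B : ℕ → ℂ := fun n =>
    Complex.exp (-s * (Real.log ((x - (n : ℝ)) ^ 2) : ℂ)) * g (1 / (x - (n : ℝ))) with hB
  -- summability
  have hSA : Summable (fun n : ℕ => A (n + 3)) := by
    apply stmt15_aux s hs C hC g hbC (fun n => x + ((n + 3 : ℕ) : ℝ))
      (fun n => -1 / (x + ((n + 3 : ℕ) : ℝ)))
    · intro n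
      have h2 : (n : ℝ) + 2 ≤ x + ((n + 3 : ℕ) : ℝ) := by push_cast; linarith
      rw [abs_of_pos (by linarith [Nat.cast_nonneg (α := ℝ) n])]
      linarith
    · intro n
      apply hmem
      have : (0:ℝ) ≤ (n:ℕ) := Nat.cast_nonneg n
      push_cast
      linarith
  have hSB : Summable (fun n : ℕ => B (n + 1)) := by
    apply stmt15_aux s hs C hC g hbC (fun n => x - ((n + 1 : ℕ) : ℝ))
      (fun n => 1 / (x - ((n + 1 : ℕ) : ℝ)))
    · intro n
      have h1 : x - ((n + 1 : ℕ) : ℝ) ≤ -((n : ℝ) + 1) := by push_cast; linarith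
      rw [abs_of_neg (by push_cast; nlinarith [Nat.cast_nonneg (α := ℝ) n])]
      linarith
    · intro n
      have h1 : (1 : ℝ) ≤ ((n + 1 : ℕ) : ℝ) - x := by push_cast; nlinarith [Nat.cast_nonneg (α := ℝ) n]
      have := hmem' (((n + 1 : ℕ) : ℝ) - x) h1
      simpa [neg_sub] using this
  -- eigenvalue equation at x and x + 1
  have hx' : x ∈ Set.Icc (-1 : ℝ) 1 := ⟨hx1, by linarith⟩
  have hx1' : x + 1 ∈ Set.Icc (-1 : ℝ) 1 := ⟨by linarith, by linarith⟩
  have h1 := heq x hx'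
  have h2 := heq (x + 1) hx1'
  have e1 : (∑' n : ℕ, Complex.exp (-s * (Real.log ((x + ((n : ℝ) + 3)) ^ 2) : ℂ)) *
      g (-1 / (x + ((n : ℝ) + 3)))) = ∑' n : ℕ, A (n + 3) := by
    apply tsum_congr; intro n; simp only [hA]; push_cast; ring_nf
  have e2 : (∑' n : ℕ, Complex.exp (-s * (Real.log ((x - ((n : ℝ) + 2)) ^ 2) : ℂ)) *
      g (1 / (x - ((n : ℝ) + 2)))) = ∑' n : ℕ, B (n + 2) := by
    apply tsum_congr; intro n; simp only [hB]; push_cast; ring_nf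
  have e3 : (∑' n : ℕ, Complex.exp (-s * (Real.log ((x + 1 + ((n : ℝ) + 3)) ^ 2) : ℂ)) *
      g (-1 / (x + 1 + ((n : ℝ) + 3)))) = ∑' n : ℕ, A (n + 4) := by
    apply tsum_congr; intro n; simp only [hA]; push_cast; ring_nf
  have e4 : (∑' n : ℕ, Complex.exp (-s * (Real.log ((x + 1 - ((n : ℝ) + 2)) ^ 2) : ℂ)) *
      g (1 / (x + 1 - ((n : ℝ) + 2)))) = ∑' n : ℕ, B (n + 1) := by
    apply tsum_congr; intro n; simp only [hB]; push_cast; ring_nf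
  rw [e1, e2] at h1
  rw [e3, e4] at h2
  have shift1 : (∑' n : ℕ, A (n + 3)) = A 3 + ∑' n : ℕ, A (n + 4) :=
    Summable.tsum_eq_zero_add hSA
  have shift2 : (∑' n : ℕ, B (n + 1)) = B 1 + ∑' n : ℕ, B (n + 2) :=
    Summable.tsum_eq_zero_add hSB
  have eA : Complex.exp (-s * (Real.log ((x + 3) ^ 2) : ℂ)) * g (-1 / (x + 3)) = A 3 := by
    simp only [hA]; norm_num
  have eB : Complex.exp (-s * (Real.log ((x - 1) ^ 2) : ℂ)) * g (1 / (x - 1)) = B 1 := by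
    simp only [hB]; norm_num
  linear_combination h1 - h2 + shift1 - ε * shift2 - eA + ε * eB
end

section
/- Let q = 3 (λ_3 = 1), let s ∈ ℂ with Re(s) > 1/2, let ε ∈ {+1, −1}, and let g : [−1, 1] → ℂ be a bounded function satisfying, for every x ∈ [−1, 1], g(x) = Σ_{n=3}^{∞} ((x+n)²)^{−s} g(−1/(x+n)) + ε · Σ_{n=2}^{∞} ((x−n)²)^{−s} g(1/(x−n)) (both series converge absolutely). Then g has the symmetry g(x) = ε · g(−x−1) for every x ∈ [−1, 0]. -/
/-- for `q = 3` (`λ_3 = 1`), `Re s > 1/2`, `ε = ±1`, and `g`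
bounded on `[-1,1]` satisfying, for every `x ∈ [-1,1]`,
`g(x) = Σ_{n≥3} ((x+n)²)^{-s} g(-1/(x+n)) + ε Σ_{n≥2} ((x-n)²)^{-s} g(1/(x-n))`,
then `g(x) = ε g(-x-1)` for every `x ∈ [-1, 0]`. -/
theorem stmt16 (s : ℂ) (hs : 1 / 2 < s.re) (ε : ℂ) (hε : ε = 1 ∨ ε = -1)
    (g : ℝ → ℂ) (hb : ∃ C : ℝ, ∀ x ∈ Set.Icc (-1 : ℝ) 1, ‖g x‖ ≤ C)
    (heq : ∀ x ∈ Set.Icc (-1 : ℝ) 1,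
      g x =
        (∑' n : ℕ, Complex.exp (-s * (Real.log ((x + ((n : ℝ) + 3)) ^ 2) : ℂ)) *
            g (-1 / (x + ((n : ℝ) + 3)))) +
        ε * ∑' n : ℕ, Complex.exp (-s * (Real.log ((x - ((n : ℝ) + 2)) ^ 2) : ℂ)) *
            g (1 / (x - ((n : ℝ) + 2)))) :
    ∀ x ∈ Set.Icc (-1 : ℝ) 0, g x = ε * g (-x - 1) := by
  intro x hx
  obtain ⟨hx1, hx0⟩ := hx
  have hx' : x ∈ Set.Icc (-1 : ℝ) 1 := ⟨hx1, by linarith⟩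
  have hy : (-x - 1) ∈ Set.Icc (-1 : ℝ) 1 := ⟨by linarith, by linarith⟩
  have h1 := heq x hx'
  have h2 := heq (-x - 1) hy
  -- the two series for g(-x-1) are the swapped series for g(x)
  have e1 : ∀ n : ℕ,
      Complex.exp (-s * (Real.log ((-x - 1 + ((n : ℝ) + 3)) ^ 2) : ℂ)) *
          g (-1 / (-x - 1 + ((n : ℝ) + 3))) =
      Complex.exp (-s * (Real.log ((x - ((n : ℝ) + 2)) ^ 2) : ℂ)) *
          g (1 / (x - ((n : ℝ) + 2))) := by
    intro n
    have ha : -x - 1 + ((n : ℝ) + 3) = -(x - ((n : ℝ) + 2)) := by ring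
    have hsq : (-(x - ((n : ℝ) + 2))) ^ 2 = (x - ((n : ℝ) + 2)) ^ 2 := by ring
    have hdiv : (-1 : ℝ) / (-(x - ((n : ℝ) + 2))) = 1 / (x - ((n : ℝ) + 2)) := by
      rw [div_neg, neg_div, neg_neg]
    rw [ha, hsq, hdiv]
  have e2 : ∀ n : ℕ,
      Complex.exp (-s * (Real.log ((-x - 1 - ((n : ℝ) + 2)) ^ 2) : ℂ)) *
          g (1 / (-x - 1 - ((n : ℝ) + 2))) =
      Complex.exp (-s * (Real.log ((x + ((n : ℝ) + 3)) ^ 2) : ℂ)) *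
          g (-1 / (x + ((n : ℝ) + 3))) := by
    intro n
    have ha : -x - 1 - ((n : ℝ) + 2) = -(x + ((n : ℝ) + 3)) := by ring
    have hsq : (-(x + ((n : ℝ) + 3))) ^ 2 = (x + ((n : ℝ) + 3)) ^ 2 := by ring
    have hdiv : (1 : ℝ) / (-(x + ((n : ℝ) + 3))) = -1 / (x + ((n : ℝ) + 3)) := by
      rw [div_neg, neg_div]
    rw [ha, hsq, hdiv]
  rw [tsum_congr e1, tsum_congr e2] at h2
  rcases hε with h | h <;> subst h <;> rw [h1, h2] <;> ring
end

section
/- Let q = 3 (λ_3 = 1), let s ∈ ℂ with Re(s) > 1/2, let ε ∈ {+1, −1}, and let g : [−1, 1] → ℂ be a bounded function satisfying, for every x ∈ [−1, 1], g(x) = Σ_{n=3}^{∞} ((x+n)²)^{−s} g(−1/(x+n)) + ε · Σ_{n=2}^{∞} ((x−n)²)^{−s} g(1/(x−n)) (both series converge absolutely). Then g satisfies the shifted four-term (Lewis–Zagier type) functional equation: for every x ∈ [−1, 0], g(x) = g(x+1) + ((x+3)²)^{−s} g(−1/(x+3)) − ((x−1)²)^{−s} g(−x/(x−1)). -/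
/-- for `q = 3` (`λ_3 = 1`), `Re s > 1/2`, `ε = ±1`, and `g`
bounded on `[-1,1]` satisfying, for every `x ∈ [-1,1]`,
`g(x) = Σ_{n≥3} ((x+n)²)^{-s} g(-1/(x+n)) + ε Σ_{n≥2} ((x-n)²)^{-s} g(1/(x-n))`,
then `g` satisfies the shifted four-term (Lewis–Zagier type) functional equation
`g(x) = g(x+1) + ((x+3)²)^{-s} g(-1/(x+3)) - ((x-1)²)^{-s} g(-x/(x-1))`
for every `x ∈ [-1, 0]`. -/
theorem stmt17 (s : ℂ) (hs : 1 / 2 < s.re) (ε : ℂ) (hε : ε = 1 ∨ ε = -1)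
    (g : ℝ → ℂ) (hb : ∃ C : ℝ, ∀ x ∈ Set.Icc (-1 : ℝ) 1, ‖g x‖ ≤ C)
    (heq : ∀ x ∈ Set.Icc (-1 : ℝ) 1,
      g x =
        (∑' n : ℕ, Complex.exp (-s * (Real.log ((x + ((n : ℝ) + 3)) ^ 2) : ℂ)) *
            g (-1 / (x + ((n : ℝ) + 3)))) +
        ε * ∑' n : ℕ, Complex.exp (-s * (Real.log ((x - ((n : ℝ) + 2)) ^ 2) : ℂ)) *
            g (1 / (x - ((n : ℝ) + 2)))) :
    ∀ x ∈ Set.Icc (-1 : ℝ) 0,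
      g x = g (x + 1) +
        Complex.exp (-s * (Real.log ((x + 3) ^ 2) : ℂ)) * g (-1 / (x + 3)) -
        Complex.exp (-s * (Real.log ((x - 1) ^ 2) : ℂ)) * g (-x / (x - 1)) := by
  obtain ⟨C, hC⟩ := hb
  have hC0 : (0:ℝ) ≤ C := le_trans (norm_nonneg _) (hC 0 ⟨by norm_num, by norm_num⟩)
  set F : ℝ → ℕ → ℂ := fun x n =>
    Complex.exp (-s * (Real.log ((x + ((n : ℝ) + 3)) ^ 2) : ℂ)) * g (-1 / (x + ((n : ℝ) + 3)))
    with hF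
  set G : ℝ → ℕ → ℂ := fun x n =>
    Complex.exp (-s * (Real.log ((x - ((n : ℝ) + 2)) ^ 2) : ℂ)) * g (1 / (x - ((n : ℝ) + 2)))
    with hG
  have hε2 : ε * ε = 1 := by rcases hε with h | h <;> simp [h]
  -- norm of the exponential factor
  have hnorm : ∀ u : ℝ, u ≠ 0 →
      ‖Complex.exp (-s * (Real.log (u ^ 2) : ℂ))‖ = |u| ^ (-(2 * s.re)) := by
    intro u hu
    have h1 : Real.log (u ^ 2) = 2 * Real.log |u| := by
      rw [Real.log_abs, Real.log_pow]; push_cast; ring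
    have h2 : (-s * (Real.log (u ^ 2) : ℂ)).re = -(2 * s.re) * Real.log |u| := by
      rw [h1]; simp [Complex.mul_re]; ring
    rw [Complex.norm_exp, h2,
      Real.rpow_def_of_pos (abs_pos.mpr hu)]
    ring_nf
  have hexp_neg : -(2 * s.re) < 0 := by linarith
  -- the comparison series
  have hmaj : Summable (fun n : ℕ => C * ((n : ℝ) + 1) ^ (-(2 * s.re))) := by
    apply Summable.mul_left
    have h := Real.summable_nat_rpow (p := -(2 * s.re)).mpr (by linarith)
    have h2 := (summable_nat_add_iff 1).mpr h
    convert h2 using 2 with n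
    · rfl
    · push_cast
      ring_nf
  -- summability of F
  have hSumF : ∀ x ∈ Set.Icc (-1:ℝ) 1, Summable (F x) := by
    intro x hx
    apply Summable.of_norm
    apply hmaj.of_nonneg_of_le (fun n => norm_nonneg _)
    intro n
    have hbase : (n:ℝ) + 1 ≤ x + ((n:ℝ) + 3) := by
      have := hx.1; linarith
    have hpos : (0:ℝ) < (n:ℝ) + 1 := by positivity
    have hpos2 : (0:ℝ) < x + ((n:ℝ) + 3) := lt_of_lt_of_le hpos hbase
    have harg : -1 / (x + ((n:ℝ) + 3)) ∈ Set.Icc (-1:ℝ) 1 := by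
      constructor
      · rw [neg_div, neg_le_neg_iff, div_le_one hpos2]
        linarith
      · have : -1 / (x + ((n:ℝ) + 3)) ≤ 0 := by
          apply div_nonpos_of_nonpos_of_nonneg <;> linarith
        linarith
    rw [norm_mul, hnorm _ hpos2.ne', abs_of_pos hpos2]
    calc (x + ((n:ℝ) + 3)) ^ (-(2 * s.re)) * ‖g (-1 / (x + ((n:ℝ) + 3)))‖
        ≤ ((n:ℝ) + 1) ^ (-(2 * s.re)) * C := by
          apply mul_le_mul
          · exact Real.rpow_le_rpow_of_nonpos hpos hbase hexp_neg.le
          · exact hC _ harg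
          · exact norm_nonneg _
          · positivity
      _ = C * ((n:ℝ) + 1) ^ (-(2 * s.re)) := by ring
  -- summability of G
  have hSumG : ∀ x ∈ Set.Icc (-1:ℝ) 1, Summable (G x) := by
    intro x hx
    apply Summable.of_norm
    apply hmaj.of_nonneg_of_le (fun n => norm_nonneg _)
    intro n
    have hbase : x - ((n:ℝ) + 2) ≤ -((n:ℝ) + 1) := by
      have := hx.2; linarith
    have hpos : (0:ℝ) < (n:ℝ) + 1 := by positivity
    have hneg : x - ((n:ℝ) + 2) < 0 := by linarith
    have habs : |x - ((n:ℝ) + 2)| = -(x - ((n:ℝ) + 2)) := abs_of_neg hneg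
    have hbase' : (n:ℝ) + 1 ≤ |x - ((n:ℝ) + 2)| := by rw [habs]; linarith
    have harg : 1 / (x - ((n:ℝ) + 2)) ∈ Set.Icc (-1:ℝ) 1 := by
      constructor
      · rw [le_div_iff_of_neg hneg]; linarith
      · have : 1 / (x - ((n:ℝ) + 2)) ≤ 0 := by
          apply div_nonpos_of_nonneg_of_nonpos <;> linarith
        linarith
    rw [norm_mul, hnorm _ hneg.ne]
    calc |x - ((n:ℝ) + 2)| ^ (-(2 * s.re)) * ‖g (1 / (x - ((n:ℝ) + 2)))‖
        ≤ ((n:ℝ) + 1) ^ (-(2 * s.re)) * C := by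
          apply mul_le_mul
          · exact Real.rpow_le_rpow_of_nonpos hpos hbase' hexp_neg.le
          · exact hC _ harg
          · exact norm_nonneg _
          · positivity
      _ = C * ((n:ℝ) + 1) ^ (-(2 * s.re)) := by ring
  -- symmetry: g(-1-y) = ε g(y) for y ∈ [-1,0]
  have hsym : ∀ y ∈ Set.Icc (-1:ℝ) 0, g (-1 - y) = ε * g y := by
    intro y hy
    have hy1 : y ∈ Set.Icc (-1:ℝ) 1 := ⟨hy.1, hy.2.trans (by norm_num)⟩
    have hy2 : -1 - y ∈ Set.Icc (-1:ℝ) 1 := ⟨by linarith [hy.2], by linarith [hy.1]⟩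
    have h1 := heq y hy1
    have h2 := heq (-1 - y) hy2
    have e1 : (∑' n : ℕ, F (-1 - y) n) = ∑' n : ℕ, G y n := by
      apply tsum_congr
      intro n
      have ha : (-1 - y + ((n:ℝ) + 3)) = -(y - ((n:ℝ) + 2)) := by ring
      simp only [hF, hG, ha]
      rw [neg_sq, div_neg, neg_div, neg_neg]
    have e2 : (∑' n : ℕ, G (-1 - y) n) = ∑' n : ℕ, F y n := by
      apply tsum_congr
      intro n
      have ha : (-1 - y - ((n:ℝ) + 2)) = -(y + ((n:ℝ) + 3)) := by ring
      simp only [hF, hG, ha]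
      rw [neg_sq, div_neg, ← neg_div]
    rw [e1, e2] at h2
    rw [h2, h1]
    linear_combination (-(∑' (n : ℕ), G y n)) * hε2
  -- main argument
  intro x hx
  have hx1 : x ∈ Set.Icc (-1:ℝ) 1 := ⟨hx.1, hx.2.trans (by norm_num)⟩
  have hx2 : x + 1 ∈ Set.Icc (-1:ℝ) 1 := ⟨by linarith [hx.1], by linarith [hx.2]⟩
  have h1 := heq x hx1
  have h2 := heq (x + 1) hx2
  have hshift1 : (∑' n : ℕ, F x n) = F x 0 + ∑' n : ℕ, F (x + 1) n := by
    rw [Summable.tsum_eq_zero_add (hSumF x hx1)]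
    congr 1
    apply tsum_congr
    intro n
    simp only [hF]
    push_cast
    rw [show x + ((n:ℝ) + 1 + 3) = (x + 1) + ((n:ℝ) + 3) by ring]
  have hshift2 : (∑' n : ℕ, G (x + 1) n) = G (x + 1) 0 + ∑' n : ℕ, G x n := by
    rw [Summable.tsum_eq_zero_add (hSumG (x+1) hx2)]
    congr 1
    apply tsum_congr
    intro n
    simp only [hG]
    push_cast
    rw [show x + 1 - ((n:ℝ) + 1 + 2) = x - ((n:ℝ) + 2) by ring]
  have key : g x = g (x + 1) + F x 0 - ε * G (x + 1) 0 := by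
    rw [h1, h2, hshift1, hshift2]; ring
  have e1 : F x 0 = Complex.exp (-s * (Real.log ((x + 3) ^ 2) : ℂ)) * g (-1 / (x + 3)) := by
    simp only [hF]; norm_num
  have hx1ne : x - 1 < 0 := by linarith [hx.2]
  have hyIcc : 1 / (x - 1) ∈ Set.Icc (-1:ℝ) 0 := by
    constructor
    · rw [le_div_iff_of_neg hx1ne]; linarith [hx.2]
    · apply div_nonpos_of_nonneg_of_nonpos <;> linarith
  have harg : -1 - 1 / (x - 1) = -x / (x - 1) := by
    rw [eq_div_iff hx1ne.ne, sub_mul, one_div, inv_mul_cancel₀ hx1ne.ne]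
    ring
  have e2 : ε * G (x + 1) 0 =
      Complex.exp (-s * (Real.log ((x - 1) ^ 2) : ℂ)) * g (-x / (x - 1)) := by
    have h0 : x + 1 - (((0:ℕ):ℝ) + 2) = x - 1 := by push_cast; ring
    simp only [hG, h0]
    rw [← harg, hsym _ hyIcc]
    ring
  rw [key, e1, e2]
end

section
/- Let q = 2h+2 with h ≥ 1 an integer, λ_q = 2 cos(π/q), f_q the Hurwitz–Nakada map, and θ_1(x) = −1/(x + λ_q). Then the f_q-orbit of −λ_q/2 is given by f_q^{i}(−λ_q/2) = θ_1^{∘(h−i)}(0) for every 0 ≤ i ≤ h; in particular f_q^{h−1}(−λ_q/2) = −1/λ_q and f_q^{h}(−λ_q/2) = 0. Moreover the orbit points are strictly increasing: −λ_q/2 = θ_1^{∘h}(0) < θ_1^{∘(h−1)}(0) < ⋯ < θ_1(0) = −1/λ_q < 0, so the orbit of −λ_q/2 under f_q consists of exactly h+1 distinct points. -/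
lemma fq_zero (q : ℕ) : fq q 0 = 0 := by simp [fq]

lemma fq_iter_zero (q : ℕ) (m : ℕ) : (fq q)^[m] 0 = 0 := by
  induction m with
  | zero => rfl
  | succ n ih => rw [Function.iterate_succ_apply', ih, fq_zero]

/-- for even `q = 2h+2` with `h ≥ 1`, the `f_q`-orbit of `-λ_q/2`
satisfies `f_q^i(-λ_q/2) = θ_1^{∘(h-i)}(0)` for `0 ≤ i ≤ h` (where
`θ_1(x) = -1/(x+λ_q)`); in particular `f_q^{h-1}(-λ_q/2) = -1/λ_q` and
`f_q^h(-λ_q/2) = 0`. Moreover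
`-λ_q/2 = θ_1^{∘h}(0) < θ_1^{∘(h-1)}(0) < ⋯ < θ_1(0) = -1/λ_q < 0`,
so the orbit consists of exactly `h+1` distinct points. -/
theorem stmt18 (h q : ℕ) (hh : 1 ≤ h) (hq : q = 2 * h + 2) :
    let t1 : ℝ → ℝ := fun x => -1 / (x + lam q)
    (∀ i ≤ h, (fq q)^[i] (-(lam q) / 2) = t1^[h - i] 0) ∧
    (fq q)^[h - 1] (-(lam q) / 2) = -1 / lam q ∧
    (fq q)^[h] (-(lam q) / 2) = 0 ∧
    t1^[h] 0 = -(lam q) / 2 ∧ t1 0 = -1 / lam q ∧ t1 0 < 0 ∧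
    (∀ i j : ℕ, i < j → j ≤ h → t1^[j] 0 < t1^[i] 0) ∧
    Function.Injective (fun i : Fin (h + 1) => (fq q)^[(i : ℕ)] (-(lam q) / 2)) ∧
    (∀ n : ℕ, (fq q)^[n] (-(lam q) / 2) ∈
      Set.range (fun i : Fin (h + 1) => (fq q)^[(i : ℕ)] (-(lam q) / 2))) := by
  intro t1
  have ht1 : ∀ x : ℝ, t1 x = -1 / (x + lam q) := fun x => rfl
  set th : ℝ := Real.pi / (q : ℝ) with hth
  have hq2 : (q : ℝ) = 2 * (h : ℝ) + 2 := by rw [hq]; push_cast; ring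
  have hh1 : (1 : ℝ) ≤ (h : ℝ) := by exact_mod_cast hh
  have hqpos : (0 : ℝ) < q := by rw [hq2]; linarith
  have hthpos : 0 < th := by rw [hth]; positivity
  have hthlt : th < Real.pi / 2 := by
    rw [hth]
    apply div_lt_div_of_pos_left Real.pi_pos (by norm_num)
    rw [hq2]; linarith
  have hlam : lam q = 2 * Real.cos th := by rw [hth]; rfl
  have hcos : 0 < Real.cos th :=
    Real.cos_pos_of_mem_Ioo ⟨by linarith [Real.pi_pos], hthlt⟩
  have hlampos : 0 < lam q := by rw [hlam]; linarith
  have hhalf : ((h : ℝ) + 1) * th = Real.pi / 2 := by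
    rw [hth, hq2]; field_simp
  have hsinth : 0 < Real.sin th :=
    Real.sin_pos_of_pos_of_lt_pi hthpos (by linarith [Real.pi_pos])
  have hsin : ∀ k : ℕ, 1 ≤ k → k ≤ h + 1 → 0 < Real.sin ((k : ℝ) * th) := by
    intro k h1 h2
    have hk1 : (1 : ℝ) ≤ (k : ℝ) := by exact_mod_cast h1
    have hk2 : (k : ℝ) ≤ (h : ℝ) + 1 := by exact_mod_cast h2
    apply Real.sin_pos_of_pos_of_lt_pi
    · nlinarith
    · have : (k : ℝ) * th ≤ ((h : ℝ) + 1) * th :=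
        mul_le_mul_of_nonneg_right hk2 hthpos.le
      rw [hhalf] at this
      linarith [Real.pi_pos]
  -- the explicit formula for the iterates of t1
  have F : ∀ k : ℕ, k ≤ h →
      t1^[k] 0 = -(Real.sin ((k : ℝ) * th)) / Real.sin (((k : ℝ) + 1) * th) := by
    intro k
    induction k with
    | zero => intro _; simp
    | succ n ih =>
      intro hn
      have h1 : 0 < Real.sin (((n : ℝ) + 1) * th) := by
        have := hsin (n + 1) (by omega) (by omega); push_cast at this; exact this
      have h2 : 0 < Real.sin (((n : ℝ) + 2) * th) := by
        have := hsin (n + 2) (by omega) (by omega); push_cast at this; exact this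
      have hrec : Real.sin (((n : ℝ) + 2) * th) =
          2 * Real.cos th * Real.sin (((n : ℝ) + 1) * th) - Real.sin ((n : ℝ) * th) := by
        have e1 : ((n : ℝ) + 2) * th = ((n : ℝ) + 1) * th + th := by ring
        have e2 : ((n : ℝ)) * th = ((n : ℝ) + 1) * th - th := by ring
        rw [e1, e2, Real.sin_add, Real.sin_sub]; ring
      rw [Function.iterate_succ_apply', ih (by omega), ht1, hlam]
      push_cast
      have hd : -(Real.sin ((n : ℝ) * th)) / Real.sin (((n : ℝ) + 1) * th)
          + 2 * Real.cos th
          = Real.sin (((n : ℝ) + 2) * th) / Real.sin (((n : ℝ) + 1) * th) := by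
        rw [hrec, sub_div, mul_div_assoc, div_self h1.ne']
        ring
      rw [hd]
      have e3 : ((n : ℝ) + 1 + 1) = ((n : ℝ) + 2) := by ring
      rw [e3]
      field_simp
  -- strict monotonicity step
  have M : ∀ k : ℕ, k + 1 ≤ h → t1^[k + 1] 0 < t1^[k] 0 := by
    intro k hk
    have h1 : 0 < Real.sin (((k : ℝ) + 1) * th) := by
      have := hsin (k + 1) (by omega) (by omega); push_cast at this; exact this
    have h2 : 0 < Real.sin (((k : ℝ) + 2) * th) := by
      have := hsin (k + 2) (by omega) (by omega); push_cast at this; exact this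
    have key : Real.sin (((k : ℝ) + 1) * th) ^ 2 -
        Real.sin ((k : ℝ) * th) * Real.sin (((k : ℝ) + 2) * th) = Real.sin th ^ 2 := by
      have e1 : ((k : ℝ) + 2) * th = ((k : ℝ) + 1) * th + th := by ring
      have e2 : ((k : ℝ)) * th = ((k : ℝ) + 1) * th - th := by ring
      rw [e1, e2, Real.sin_add, Real.sin_sub]
      nlinarith [Real.sin_sq_add_cos_sq (((k : ℝ) + 1) * th), Real.sin_sq_add_cos_sq th]
    rw [F k (by omega), F (k + 1) (by omega)]
    push_cast
    have e3 : ((k : ℝ) + 1 + 1) = ((k : ℝ) + 2) := by ring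
    rw [e3, div_lt_div_iff₀ h2 h1]
    nlinarith [key, hsinth]
  have mono : ∀ i j : ℕ, i < j → j ≤ h → t1^[j] 0 < t1^[i] 0 := by
    intro i j
    induction j with
    | zero => omega
    | succ n ih =>
      intro hij hj
      rcases Nat.lt_succ_iff_lt_or_eq.mp hij with h1 | h1
      · exact lt_trans (M n (by omega)) (ih h1 (by omega))
      · subst h1; exact M i (by omega)
  -- endpoint values
  have Fh : t1^[h] 0 = -(lam q) / 2 := by
    rw [F h le_rfl]
    have e1 : (h : ℝ) * th = Real.pi / 2 - th := by linarith [hhalf]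
    rw [hhalf, e1, Real.sin_pi_div_two_sub, Real.sin_pi_div_two, hlam]
    ring
  have F0 : t1^[0] 0 = 0 := rfl
  -- bounds on the orbit points
  have hub : ∀ k : ℕ, k ≤ h → t1^[k] 0 ≤ 0 := by
    intro k hk
    rcases Nat.eq_zero_or_pos k with h0 | h0
    · subst h0; simp
    · have := mono 0 k h0 hk; rw [F0] at this; linarith
  have hlb : ∀ k : ℕ, k < h → -(lam q) / 2 < t1^[k] 0 := by
    intro k hk
    have := mono k h hk le_rfl
    rw [Fh] at this; linarith
  -- fq inverts t1 on the orbit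
  have fqstep : ∀ k : ℕ, 1 ≤ k → k ≤ h → fq q (t1^[k] 0) = t1^[k - 1] 0 := by
    intro k hk1 hk2
    set y : ℝ := t1^[k - 1] 0 with hy
    have hy0 : y ≤ 0 := hub (k - 1) (by omega)
    have hylb : -(lam q) / 2 < y := hlb (k - 1) (by omega)
    have hypos : 0 < y + lam q := by linarith
    have hit : t1^[k] 0 = -1 / (y + lam q) := by
      have hk : k = (k - 1) + 1 := by omega
      rw [hk, Function.iterate_succ_apply', ht1]
    have htkneg : t1^[k] 0 < 0 := by
      rw [hit]; exact div_neg_of_neg_of_pos (by norm_num) hypos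
    have hinv : -1 / (t1^[k] 0) = y + lam q := by
      rw [hit]; field_simp
    have hnear : nearLam q (-1 / t1^[k] 0) = 1 := by
      rw [hinv]
      unfold nearLam mfloor
      have hv : (y + lam q) / lam q + 1 / 2 = y / lam q + 3 / 2 := by
        field_simp; ring
      rw [hv]
      have hv1 : 1 < y / lam q + 3 / 2 := by
        have : -(1 : ℝ) / 2 < y / lam q := by
          rw [lt_div_iff₀ hlampos]; linarith
        linarith
      have hv2 : y / lam q + 3 / 2 ≤ 2 := by
        have : y / lam q ≤ 0 := div_nonpos_of_nonpos_of_nonneg hy0 hlampos.le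
        linarith
      rw [if_pos (by linarith)]
      have hc : ⌈y / lam q + 3 / 2⌉ = 2 := by
        rw [Int.ceil_eq_iff]
        constructor
        · push_cast; linarith
        · push_cast; linarith
      rw [hc]; norm_num
    have hne : t1^[k] 0 ≠ 0 := ne_of_lt htkneg
    simp only [fq]
    rw [if_neg hne, hnear, hinv]
    push_cast; ring
  -- the orbit description
  have obt : ∀ i : ℕ, i ≤ h → (fq q)^[i] (-(lam q) / 2) = t1^[h - i] 0 := by
    intro i
    induction i with
    | zero => intro _; simpa using Fh.symm
    | succ n ih =>
      intro hn
      rw [Function.iterate_succ_apply', ih (by omega)]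
      have hstep : fq q (t1^[h - n] 0) = t1^[h - n - 1] 0 :=
        fqstep (h - n) (by omega) (by omega)
      have he : h - n - 1 = h - (n + 1) := by omega
      rw [hstep, he]
  refine ⟨obt, ?_, ?_, Fh, ?_, ?_, mono, ?_, ?_⟩
  · rw [obt (h - 1) (by omega)]
    have : h - (h - 1) = 1 := by omega
    rw [this, Function.iterate_one, ht1]
    norm_num
  · rw [obt h le_rfl]
    simp
  · rw [ht1, zero_add]
  · rw [ht1, zero_add]
    exact div_neg_of_neg_of_pos (by norm_num) hlampos
  · intro i j hij
    simp only at hij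
    rw [obt i (Nat.lt_succ_iff.mp i.isLt), obt j (Nat.lt_succ_iff.mp j.isLt)] at hij
    by_contra hne
    have hne' : h - (i : ℕ) ≠ h - (j : ℕ) := by
      intro e
      apply hne
      have hi := Nat.lt_succ_iff.mp i.isLt
      have hj := Nat.lt_succ_iff.mp j.isLt
      ext
      omega
    rcases lt_or_gt_of_ne hne' with hl | hl
    · exact absurd hij (ne_of_gt (mono _ _ hl (by omega)))
    · exact absurd hij (ne_of_lt (mono _ _ hl (by omega)))
  · intro n
    by_cases hn : n ≤ h
    · exact ⟨⟨n, by omega⟩, rfl⟩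
    · refine ⟨⟨h, by omega⟩, ?_⟩
      show (fq q)^[h] (-(lam q) / 2) = (fq q)^[n] (-(lam q) / 2)
      have hhz : (fq q)^[h] (-(lam q) / 2) = 0 := by rw [obt h le_rfl]; simp
      have hnn : n = (n - h) + h := by omega
      rw [hhz, hnn, Function.iterate_add_apply, hhz, fq_iter_zero]
end
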